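/- arXiv:0911.0871 — 5 statements merged into one kernel-verified Lean document; each statement's English description precedes it below -/
import Mathlib

section
/- Suppose a sequence γ : ℕ → [0,∞) satisfies, for fixed constants c₁ ∈ (0,1), C₁ > 0, λ ∈ (0,1], ε > 0, the recursive inequality γ(⌊r(1+λ)⌋) ≤ C₁/(√ε · r²) + ε^{3/5} r² γ(r) γ(⌊λr/2⌋) + (1−c₁)γ(r) for all r. If additionally ε = M^{−20/11} where M is chosen so large that (2C₁ + 8λ^{−2})M^{−1/11} ≤ c₁/2, and λ satisfies (1+λ)² ≤ 2 and (1−c₁)(1+λ)² ≤ 1 − c₁/2, then the inductive step holds: if γ(s) ≤ M/s² for all s < r(1+λ), then γ(r(1+λ)) ≤ M/(r(1+λ))². -/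
/-- The arithmetic induction step of Kozma–Nachmias: from the recursive inequality
`γ(r(1+λ)) ≤ C₁/(√ε r²) + ε^{3/5} r² γ(r) γ(λr/2) + (1−c₁)γ(r)` and the choices
`ε = M^{−20/11}`, `(2C₁+8λ^{−2})M^{−1/11} ≤ c₁/2`, `(1+λ)² ≤ 2`,
`(1−c₁)(1+λ)² ≤ 1 − c₁/2`, the inductive step `γ(s) ≤ M/s²` for all `s < r(1+λ)`
implies `γ(r(1+λ)) ≤ M/(r(1+λ))²`. -/
theorem stmt1 (γ : ℝ → ℝ) (c₁ C₁ lam ε M : ℝ)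
    (hγ : ∀ r, 0 ≤ γ r)
    (hc₁ : 0 < c₁) (hc₁' : c₁ < 1) (hC₁ : 0 < C₁)
    (hlam : 0 < lam) (hlam1 : lam ≤ 1)
    (hε : 0 < ε) (hM : 0 < M)
    (hrec : ∀ r : ℝ, 0 < r →
      γ (r * (1 + lam)) ≤ C₁ / (Real.sqrt ε * r ^ 2)
        + ε ^ ((3 : ℝ) / 5) * r ^ 2 * γ r * γ (lam * r / 2) + (1 - c₁) * γ r)
    (hεM : ε = M ^ (-(20 : ℝ) / 11))
    (hM1 : (2 * C₁ + 8 * lam⁻¹ ^ 2) * M ^ (-(1 : ℝ) / 11) ≤ c₁ / 2)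
    (hl1 : (1 + lam) ^ 2 ≤ 2) (hl2 : (1 - c₁) * (1 + lam) ^ 2 ≤ 1 - c₁ / 2)
    (r : ℝ) (hr : 0 < r)
    (hind : ∀ s : ℝ, 0 < s → s < r * (1 + lam) → γ s ≤ M / s ^ 2) :
    γ (r * (1 + lam)) ≤ M / (r * (1 + lam)) ^ 2 := by
  set A := M ^ (-(1:ℝ)/11) with hAdef
  have hA : 0 < A := Real.rpow_pos_of_pos hM _
  set B := M ^ ((10:ℝ)/11) with hBdef
  have hB0 : 0 < B := Real.rpow_pos_of_pos hM _
  clear_value A B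
  have hB : B = M * A := by
    rw [hBdef, hAdef, show (10:ℝ)/11 = 1 + (-(1:ℝ)/11) by norm_num,
      Real.rpow_add hM, Real.rpow_one]
  have hsqrt : Real.sqrt ε = B⁻¹ := by
    rw [hεM, Real.sqrt_eq_rpow, ← Real.rpow_mul hM.le, hBdef,
      ← Real.rpow_neg hM.le]
    norm_num
  have hpow : ε ^ ((3:ℝ)/5) = B / M ^ 2 := by
    rw [hεM, ← Real.rpow_mul hM.le, hBdef,
      show (-(20:ℝ)/11) * (3/5) = (10:ℝ)/11 + (-2 : ℝ) by norm_num,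
      Real.rpow_add hM, Real.rpow_neg hM.le]
    rw [show ((2:ℝ)) = ((2:ℕ) : ℝ) by norm_num, Real.rpow_natCast]
    ring
  have h1 : γ r ≤ M / r ^ 2 := hind r hr (by nlinarith)
  have hs : 0 < lam * r / 2 := by positivity
  have h2 : γ (lam * r / 2) ≤ M / (lam * r / 2) ^ 2 :=
    hind _ hs (by nlinarith)
  have key := hrec r hr
  have e1 : C₁ / (Real.sqrt ε * r ^ 2) = C₁ * B / r ^ 2 := by
    rw [hsqrt]; field_simp
  have hr2 : (0:ℝ) < r ^ 2 := by positivity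
  have emid : ε ^ ((3:ℝ)/5) * r ^ 2 * γ r * γ (lam * r / 2)
      ≤ 4 * lam⁻¹ ^ 2 * B / r ^ 2 := by
    rw [hpow]
    have hprod : γ r * γ (lam * r / 2) ≤ (M / r ^ 2) * (M / (lam * r / 2) ^ 2) :=
      mul_le_mul h1 h2 (hγ _) (by positivity)
    have : B / M ^ 2 * r ^ 2 * γ r * γ (lam * r / 2)
        ≤ B / M ^ 2 * r ^ 2 * ((M / r ^ 2) * (M / (lam * r / 2) ^ 2)) := by
      rw [mul_assoc]
      apply mul_le_mul_of_nonneg_left hprod (by positivity)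
    refine this.trans (le_of_eq ?_)
    field_simp
    ring
  have e3 : (1 - c₁) * γ r ≤ (1 - c₁) * (M / r ^ 2) :=
    mul_le_mul_of_nonneg_left h1 (by linarith)
  have total : γ (r * (1 + lam)) ≤ (C₁ * B + 4 * lam⁻¹ ^ 2 * B + (1 - c₁) * M) / r ^ 2 := by
    rw [e1] at key
    have := key.trans (by linarith [emid, e3] :
      C₁ * B / r ^ 2 + ε ^ ((3:ℝ)/5) * r ^ 2 * γ r * γ (lam * r / 2) + (1 - c₁) * γ r
        ≤ C₁ * B / r ^ 2 + 4 * lam⁻¹ ^ 2 * B / r ^ 2 + (1 - c₁) * (M / r ^ 2))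
    calc γ (r * (1 + lam)) ≤ _ := this
      _ = _ := by field_simp
  refine total.trans ?_
  rw [div_le_div_iff₀ hr2 (by positivity)]
  have hfin : (C₁ * B + 4 * lam⁻¹ ^ 2 * B + (1 - c₁) * M) * (1 + lam) ^ 2 ≤ M := by
    have hXpos : 0 ≤ C₁ * B + 4 * lam⁻¹ ^ 2 * B := by positivity
    have t1 : (C₁ * B + 4 * lam⁻¹ ^ 2 * B) * (1 + lam) ^ 2
        ≤ (C₁ * B + 4 * lam⁻¹ ^ 2 * B) * 2 := mul_le_mul_of_nonneg_left hl1 hXpos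
    have t2 : (C₁ * B + 4 * lam⁻¹ ^ 2 * B) * 2 = ((2 * C₁ + 8 * lam⁻¹ ^ 2) * A) * M := by
      rw [hB]; ring
    have t3 : ((2 * C₁ + 8 * lam⁻¹ ^ 2) * A) * M ≤ (c₁ / 2) * M :=
      mul_le_mul_of_nonneg_right hM1 hM.le
    have t5 : ((1 - c₁) * (1 + lam) ^ 2) * M ≤ (1 - c₁ / 2) * M :=
      mul_le_mul_of_nonneg_right hl2 hM.le
    have expand : (C₁ * B + 4 * lam⁻¹ ^ 2 * B + (1 - c₁) * M) * (1 + lam) ^ 2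
        = (C₁ * B + 4 * lam⁻¹ ^ 2 * B) * (1 + lam) ^ 2 + ((1 - c₁) * (1 + lam) ^ 2) * M := by
      ring
    linarith
  calc (C₁ * B + 4 * lam⁻¹ ^ 2 * B + (1 - c₁) * M) * (r * (1 + lam)) ^ 2
      = ((C₁ * B + 4 * lam⁻¹ ^ 2 * B + (1 - c₁) * M) * (1 + lam) ^ 2) * r ^ 2 := by ring
    _ ≤ M * r ^ 2 := mul_le_mul_of_nonneg_right hfin hr2.le
end

section
/- Assume the two-point function lower bound P_{p_c}(0 ↔ x) ≥ c|x|^{2−d} for x ∈ Q_{2r}∖Q_r and the upper bound of the previous statement. Then P_{p_c}(0 ↔ ∂Q_r) ≥ c'/r² for all r > 0, for some constant c' > 0. -/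
open MeasureTheory ProbabilityTheory
/-- Vertices of the lattice `ℤ^d`. -/
abbrev Vd (d : ℕ) := Fin d → ℤ

/-- A percolation configuration: each (unordered) edge is open (`true`) or closed. -/
abbrev Config (d : ℕ) := Sym2 (Vd d) → Bool

/-- The cube `Q_r = {−r,…,r}^d`. -/
def cube (d r : ℕ) : Set (Vd d) := {x | ∀ i, |x i| ≤ (r : ℤ)}

/-- The internal boundary `∂Q_r`: vertices of `Q_r` with an edge leaving `Q_r`. -/
def inBdry (d : ℕ) (E : Set (Sym2 (Vd d))) (r : ℕ) : Set (Vd d) :=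
  {z | z ∈ cube d r ∧ ∃ w, w ∉ cube d r ∧ s(z, w) ∈ E}

/-- `a` is connected to `b` by an open path staying inside `S`. -/
def ConnIn (d : ℕ) (E : Set (Sym2 (Vd d))) (ω : Config d) (S : Set (Vd d))
    (a b : Vd d) : Prop :=
  ∃ n : ℕ, ∃ γ : ℕ → Vd d, γ 0 = a ∧ γ n = b ∧ (∀ i ≤ n, γ i ∈ S) ∧
    ∀ i < n, s(γ i, γ (i + 1)) ∈ E ∧ ω s(γ i, γ (i + 1)) = true

/-- `μ` is Bernoulli bond percolation with parameter `p` on the edge set `E`: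
a probability measure under which the edge states are independent and each
edge of `E` is open with probability `p`. -/
def IsBernoulli (d : ℕ) (E : Set (Sym2 (Vd d))) (p : ℝ)
    (μ : Measure (Config d)) : Prop :=
  IsProbabilityMeasure μ ∧
  iIndepFun (fun e (ω : Config d) => ω e) μ ∧
  ∀ e ∈ E, μ {ω | ω e = true} = ENNReal.ofReal p

/-- The Euclidean norm of a lattice point. -/
noncomputable def euclNorm (d : ℕ) (x : Vd d) : ℝ :=
  Real.sqrt (∑ i, ((x i : ℝ)) ^ 2)

def extPath (d n : ℕ) (v : Fin (n+1) → Vd d) : ℕ → Vd d :=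
  fun i => v ⟨min i n, by omega⟩

lemma measConn (d : ℕ) (E : Set (Sym2 (Vd d))) (a b : Vd d) :
    MeasurableSet {ω : Config d | ConnIn d E ω Set.univ a b} := by
  have heq : {ω : Config d | ConnIn d E ω Set.univ a b} =
      ⋃ (n : ℕ), ⋃ (v : Fin (n+1) → Vd d),
        {ω : Config d | extPath d n v 0 = a ∧ extPath d n v n = b ∧
          ∀ i < n, s(extPath d n v i, extPath d n v (i+1)) ∈ E ∧
            ω s(extPath d n v i, extPath d n v (i+1)) = true} := by
    ext ω
    simp only [Set.mem_setOf_eq, Set.mem_iUnion]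
    constructor
    · rintro ⟨n, γ, h0, hn, -, he⟩
      refine ⟨n, fun i => γ i, ?_, ?_, ?_⟩
      · simpa [extPath] using h0
      · simpa [extPath] using hn
      · intro i hi
        have h1 : min i n = i := by omega
        have h2 : min (i+1) n = i+1 := by omega
        simpa [extPath, h1, h2] using he i hi
    · rintro ⟨n, v, h0, hn, he⟩
      exact ⟨n, extPath d n v, h0, hn, fun _ _ => Set.mem_univ _, he⟩
  rw [heq]
  refine MeasurableSet.iUnion fun n => MeasurableSet.iUnion fun v => ?_
  by_cases h0 : extPath d n v 0 = a
  · by_cases hn : extPath d n v n = b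
    · have : {ω : Config d | extPath d n v 0 = a ∧ extPath d n v n = b ∧
          ∀ i < n, s(extPath d n v i, extPath d n v (i+1)) ∈ E ∧
            ω s(extPath d n v i, extPath d n v (i+1)) = true} =
          ⋂ i ∈ Finset.range n, {ω : Config d | s(extPath d n v i, extPath d n v (i+1)) ∈ E ∧
            ω s(extPath d n v i, extPath d n v (i+1)) = true} := by
        ext ω; simp [h0, hn]
      rw [this]
      refine MeasurableSet.biInter (Set.to_countable _) fun i _ => ?_
      by_cases hE : s(extPath d n v i, extPath d n v (i+1)) ∈ E
      · have : {ω : Config d | s(extPath d n v i, extPath d n v (i+1)) ∈ E ∧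
            ω s(extPath d n v i, extPath d n v (i+1)) = true} =
            (fun ω : Config d => ω s(extPath d n v i, extPath d n v (i+1))) ⁻¹' {true} := by
          ext ω; simp [hE]
        rw [this]
        exact (measurable_pi_apply _) (measurableSet_singleton _)
      · simp [hE]
    · simp [hn]
  · simp [h0]

lemma measBdry (d : ℕ) (E : Set (Sym2 (Vd d))) (r : ℕ) :
    MeasurableSet {ω : Config d | ∃ z ∈ inBdry d E r, ConnIn d E ω Set.univ 0 z} := by
  have : {ω : Config d | ∃ z ∈ inBdry d E r, ConnIn d E ω Set.univ 0 z} =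
      ⋃ z ∈ inBdry d E r, {ω : Config d | ConnIn d E ω Set.univ 0 z} := by
    ext ω; simp
  rw [this]
  exact MeasurableSet.biUnion (Set.to_countable _) fun z _ => measConn d E 0 z

/-- the finset version of the cube -/
noncomputable def box (d r : ℕ) : Finset (Vd d) := Fintype.piFinset (fun _ => Finset.Icc (-(r:ℤ)) r)

lemma coe_box (d r : ℕ) : (box d r : Set (Vd d)) = cube d r := by
  ext x
  simp [box, cube, Fintype.mem_piFinset, abs_le, Pi.le_def]
  constructor
  · rintro ⟨h1, h2⟩ i; exact ⟨h1 i, h2 i⟩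
  · intro h; exact ⟨fun i => (h i).1, fun i => (h i).2⟩

lemma mem_box (d r : ℕ) (x : Vd d) : x ∈ box d r ↔ x ∈ cube d r := by
  rw [← coe_box]; rfl

lemma card_box (d r : ℕ) : (box d r).card = (2*r+1)^d := by
  simp [box, Fintype.card_piFinset, Int.card_Icc]
  congr 1
  omega

lemma box_subset (d r s : ℕ) (h : r ≤ s) : box d r ⊆ box d s := by
  intro x hx
  rw [mem_box] at *
  intro i
  exact le_trans (hx i) (by exact_mod_cast h)

/-- inclusion: connection to a point outside Q_r implies connection to the boundary -/
lemma conn_subset_bdry (d : ℕ) (E : Set (Sym2 (Vd d))) (r : ℕ) (x : Vd d)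
    (hx : x ∉ cube d r) :
    {ω : Config d | ConnIn d E ω Set.univ 0 x} ⊆
      {ω : Config d | ∃ z ∈ inBdry d E r, ConnIn d E ω Set.univ 0 z} := by
  rintro ω ⟨n, γ, h0, hn, -, he⟩
  have hex : ∃ i, γ i ∉ cube d r := ⟨n, hn ▸ hx⟩
  classical
  let k := Nat.find hex
  have hk : γ k ∉ cube d r := Nat.find_spec hex
  have hk0 : k ≠ 0 := by
    intro h
    apply hk
    rw [h, h0]
    intro i
    simp
  have hkn : k ≤ n := Nat.find_le (hn ▸ hx)
  have hprev : γ (k-1) ∈ cube d r := by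
    by_contra h
    have : k ≤ k - 1 := Nat.find_le h
    omega
  have hedge : s(γ (k-1), γ k) ∈ E ∧ ω s(γ (k-1), γ k) = true := by
    have := he (k-1) (by omega)
    have hk1 : k - 1 + 1 = k := by omega
    rwa [hk1] at this
  refine ⟨γ (k-1), ⟨hprev, γ k, hk, hedge.1⟩, k-1, γ, h0, rfl, fun _ _ => Set.mem_univ _, ?_⟩
  intro i hi
  exact he i (by omega)

lemma second_moment {α : Type*} [MeasurableSpace α] (μ : Measure α) [IsProbabilityMeasure μ]
    {ι : Type*} (s : Finset ι) (A : ι → Set α) (B : Set α)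
    (hA : ∀ i, MeasurableSet (A i)) (hB : MeasurableSet B)
    (hsub : ∀ i ∈ s, A i ⊆ B) :
    (∑ i ∈ s, (μ (A i)).toReal)^2
      ≤ (μ B).toReal * ∑ i ∈ s, ∑ j ∈ s, (μ (A i ∩ A j)).toReal := by
  classical
  set f : α → ENNReal := fun ω => ∑ i ∈ s, (A i).indicator 1 ω with hf_def
  set g : α → ENNReal := B.indicator 1 with hg_def
  have hfm : Measurable f := by
    apply Finset.measurable_sum
    intro i _
    exact (measurable_one.indicator (hA i))
  have hgm : Measurable g := measurable_one.indicator hB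
  have key1 : ∫⁻ ω, f ω ∂μ = ∑ i ∈ s, μ (A i) := by
    rw [lintegral_finset_sum _ (fun i _ => measurable_one.indicator (hA i))]
    exact Finset.sum_congr rfl fun i _ => lintegral_indicator_one (hA i)
  have key2 : ∫⁻ ω, f ω ^ (2:ℝ) ∂μ = ∑ i ∈ s, ∑ j ∈ s, μ (A i ∩ A j) := by
    have hpt : ∀ ω, f ω ^ (2:ℝ) = ∑ i ∈ s, ∑ j ∈ s, (A i ∩ A j).indicator 1 ω := by
      intro ω
      have : f ω ^ (2:ℝ) = f ω * f ω := by
        rw [show (2:ℝ) = ((2:ℕ):ℝ) by norm_num, ENNReal.rpow_natCast]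
        ring
      rw [this, hf_def]
      rw [Finset.sum_mul_sum]
      refine Finset.sum_congr rfl fun i _ => Finset.sum_congr rfl fun j _ => ?_
      rw [Set.inter_indicator_one]
      rfl
    simp_rw [hpt]
    rw [lintegral_finset_sum _ (fun i _ => Finset.measurable_sum _
      (fun j _ => measurable_one.indicator ((hA i).inter (hA j))))]
    refine Finset.sum_congr rfl fun i _ => ?_
    rw [lintegral_finset_sum _ (fun j _ => measurable_one.indicator ((hA i).inter (hA j)))]
    exact Finset.sum_congr rfl fun j _ => lintegral_indicator_one ((hA i).inter (hA j))
  have key3 : ∫⁻ ω, g ω ^ (2:ℝ) ∂μ = μ B := by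
    have hpt : ∀ ω, g ω ^ (2:ℝ) = g ω := by
      intro ω
      rw [hg_def]
      by_cases hω : ω ∈ B
      · simp [Set.indicator_of_mem hω]
      · rw [Set.indicator_of_notMem hω]
        exact ENNReal.zero_rpow_of_pos (by norm_num)
    simp_rw [hpt]
    rw [lintegral_indicator_one hB]
  have key4 : f * g = f := by
    funext ω
    by_cases hω : ω ∈ B
    · simp [hg_def, Set.indicator_of_mem hω]
    · have : f ω = 0 := by
        rw [hf_def]
        refine Finset.sum_eq_zero fun i hi => ?_
        exact Set.indicator_of_notMem (fun h => hω (hsub i hi h)) 1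
      simp [this]
  have hconj : Real.HolderConjugate 2 2 := Real.HolderConjugate.two_two
  have holder := ENNReal.lintegral_mul_le_Lp_mul_Lq μ hconj hfm.aemeasurable hgm.aemeasurable
  rw [key4, key1, key2, key3] at holder
  -- square both sides
  have hsq : (∑ i ∈ s, μ (A i))^2 ≤ (∑ i ∈ s, ∑ j ∈ s, μ (A i ∩ A j)) * μ B := by
    calc (∑ i ∈ s, μ (A i))^2
        ≤ ((∑ i ∈ s, ∑ j ∈ s, μ (A i ∩ A j)) ^ (1/(2:ℝ)) * μ B ^ (1/(2:ℝ)))^2 :=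
          pow_le_pow_left' holder 2
      _ = (∑ i ∈ s, ∑ j ∈ s, μ (A i ∩ A j)) * μ B := by
          rw [mul_pow, ← ENNReal.rpow_natCast (_ ^ (1/(2:ℝ))) 2,
            ← ENNReal.rpow_natCast (μ B ^ (1/(2:ℝ))) 2, ← ENNReal.rpow_mul, ← ENNReal.rpow_mul]
          norm_num
  -- convert to reals
  have h2ne : (∑ i ∈ s, ∑ j ∈ s, μ (A i ∩ A j)) ≠ ⊤ :=
    ENNReal.sum_ne_top.2 fun i _ => ENNReal.sum_ne_top.2 fun j _ => measure_ne_top μ _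
  have := ENNReal.toReal_mono (by
      exact ENNReal.mul_ne_top h2ne (measure_ne_top μ B)) hsq
  rw [ENNReal.toReal_pow, ENNReal.toReal_mul, ENNReal.toReal_sum
    (fun i _ => measure_ne_top μ _)] at this
  rw [ENNReal.toReal_sum (fun i _ =>
    ENNReal.sum_ne_top.2 fun j _ => measure_ne_top μ _)] at this
  calc (∑ i ∈ s, (μ (A i)).toReal)^2
      ≤ (∑ i ∈ s, ∑ j ∈ s, (μ (A i ∩ A j)).toReal) * (μ B).toReal := by
        refine le_trans this (le_of_eq ?_)
        congr 1
        exact Finset.sum_congr rfl fun i _ => ENNReal.toReal_sum (fun j _ => measure_ne_top μ _)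
    _ = (μ B).toReal * ∑ i ∈ s, ∑ j ∈ s, (μ (A i ∩ A j)).toReal := mul_comm _ _

noncomputable def euclNorm' (d : ℕ) (x : Vd d) : ℝ :=
  Real.sqrt (∑ i, ((x i : ℝ)) ^ 2)

lemma euclNorm'_le (d r : ℕ) (x : Vd d) (hx : x ∈ cube d (2*r)) :
    euclNorm' d x ≤ 2 * Real.sqrt d * r := by
  rw [euclNorm']
  have hb : (∑ i, ((x i:ℝ))^2) ≤ (d:ℝ) * (2*r)^2 := by
    calc ∑ i, ((x i:ℝ))^2 ≤ ∑ _i : Fin d, ((2*(r:ℝ)))^2 :=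
          Finset.sum_le_sum fun i _ => by
            have h1 : |(x i : ℝ)| ≤ 2*(r:ℝ) := by
              have h := hx i
              rw [← Int.cast_abs]
              exact_mod_cast h
            have h2 := abs_le.1 h1
            nlinarith [h2.1, h2.2]
      _ = (d:ℝ) * (2*r)^2 := by simp [Finset.sum_const]
  calc Real.sqrt (∑ i, ((x i:ℝ))^2) ≤ Real.sqrt ((d:ℝ)*(2*r)^2) := Real.sqrt_le_sqrt hb
    _ = Real.sqrt d * (2*r) := by
        rw [Real.sqrt_mul (by positivity), Real.sqrt_sq (by positivity)]
    _ = 2*Real.sqrt d*r := by ring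

lemma euclNorm'_pos (d r : ℕ) (x : Vd d) (hx : x ∉ cube d r) :
    0 < euclNorm' d x := by
  obtain ⟨i, hi⟩ : ∃ i, ¬(|x i| ≤ (r:ℤ)) := by
    by_contra h
    push_neg at h
    exact hx h
  have hne : (x i : ℝ) ≠ 0 := by
    have : x i ≠ 0 := by
      intro h
      apply hi
      simp [h]
    exact_mod_cast this
  rw [euclNorm']
  apply Real.sqrt_pos.2
  calc (0:ℝ) < (x i:ℝ)^2 := by positivity
    _ ≤ ∑ j, ((x j:ℝ))^2 :=
        Finset.single_le_sum (f := fun j => ((x j:ℝ))^2) (fun j _ => by positivity) (Finset.mem_univ i)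

/-- Second-moment lower bound on the one-arm probability: assuming the two-point
lower bound `P(0 ↔ x) ≥ c|x|^{2−d}` on `Q_{2r}∖Q_r` and the tree-graph upper
bound `Σ_{x,y ∈ Q_r} P(0 ↔ x, 0 ↔ y) ≤ C r⁶`, one has
`P(0 ↔ ∂Q_r) ≥ c'/r²` for some `c' > 0` and all `r > 0`. -/
theorem stmt7 (d : ℕ) (hd : 6 < d) (E : Set (Sym2 (Vd d))) (p : ℝ)
    (μ : Measure (Config d)) (hbern : IsBernoulli d E p μ)
    (c C : ℝ) (hc : 0 < c) (hC : 0 < C)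
    (hlower : ∀ r : ℕ, 0 < r → ∀ x : Vd d, x ∈ cube d (2 * r) \ cube d r →
      c * euclNorm d x ^ ((2 : ℝ) - d)
        ≤ (μ {ω | ConnIn d E ω Set.univ 0 x}).toReal)
    (hupper : ∀ r : ℕ, 0 < r →
      ∑ᶠ x ∈ cube d r, ∑ᶠ y ∈ cube d r,
        (μ ({ω | ConnIn d E ω Set.univ 0 x} ∩
            {ω | ConnIn d E ω Set.univ 0 y})).toReal
        ≤ C * (r : ℝ) ^ 6) :
    ∃ c' > (0 : ℝ), ∀ r : ℕ, 0 < r →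
      c' / (r : ℝ) ^ 2
        ≤ (μ {ω | ∃ z ∈ inBdry d E r, ConnIn d E ω Set.univ 0 z}).toReal := by
  classical
  haveI : IsProbabilityMeasure μ := hbern.1
  have hdR : (0:ℝ) < Real.sqrt d := Real.sqrt_pos.2 (by positivity)
  set c₁ : ℝ := c * ((4:ℝ)^d - 3^d) * (2*Real.sqrt d)^((2:ℝ)-(d:ℝ)) with hc₁def
  have hc₁ : 0 < c₁ := by
    apply mul_pos (mul_pos hc _) (Real.rpow_pos_of_pos (by positivity) _)
    have : (3:ℝ)^d < 4^d := by
      apply pow_lt_pow_left₀ (by norm_num) (by norm_num)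
      omega
    linarith
  refine ⟨c₁^2 / (64*C), by positivity, fun r hr => ?_⟩
  have hrR : (0:ℝ) < r := by exact_mod_cast hr
  set A : Vd d → Set (Config d) := fun x => {ω | ConnIn d E ω Set.univ 0 x} with hAdef
  set B : Set (Config d) := {ω | ∃ z ∈ inBdry d E r, ConnIn d E ω Set.univ 0 z} with hBdef
  set s : Finset (Vd d) := box d (2*r) \ box d r with hsdef
  have hmem : ∀ x ∈ s, x ∈ cube d (2*r) \ cube d r := by
    intro x hx
    rw [hsdef, Finset.mem_sdiff] at hx
    exact ⟨(mem_box _ _ _).1 hx.1, fun h => hx.2 ((mem_box _ _ _).2 h)⟩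
  -- second moment inequality
  have hsm := second_moment μ s A B (fun x => measConn d E 0 x) (measBdry d E r)
    (fun x hx => conn_subset_bdry d E r x (hmem x hx).2)
  set S1 : ℝ := ∑ x ∈ s, (μ (A x)).toReal with hS1def
  set S2 : ℝ := ∑ x ∈ s, ∑ y ∈ s, (μ (A x ∩ A y)).toReal with hS2def
  -- lower bound on S1
  have hptwise : ∀ x ∈ s, c₁ / ((4:ℝ)^d - 3^d) * (r:ℝ)^((2:ℝ)-(d:ℝ)) ≤ (μ (A x)).toReal := by
    intro x hx
    obtain ⟨hx2, hx1⟩ := hmem x hx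
    have hpos := euclNorm'_pos d r x hx1
    have hle := euclNorm'_le d r x hx2
    have heq : euclNorm d x = euclNorm' d x := rfl
    have hrp : (2*Real.sqrt d*(r:ℝ))^((2:ℝ)-(d:ℝ)) ≤ euclNorm' d x ^ ((2:ℝ)-(d:ℝ)) := by
      apply Real.rpow_le_rpow_of_nonpos hpos hle
      have : (7:ℝ) ≤ (d:ℝ) := by exact_mod_cast hd
      linarith
    calc c₁ / ((4:ℝ)^d - 3^d) * (r:ℝ)^((2:ℝ)-(d:ℝ))
        = c * ((2*Real.sqrt d)^((2:ℝ)-(d:ℝ)) * (r:ℝ)^((2:ℝ)-(d:ℝ))) := by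
          rw [hc₁def]
          have h43 : ((4:ℝ)^d - 3^d) ≠ 0 := by
            have : (3:ℝ)^d < 4^d := by
              apply pow_lt_pow_left₀ (by norm_num) (by norm_num); omega
            linarith
          field_simp
      _ = c * (2*Real.sqrt d*(r:ℝ))^((2:ℝ)-(d:ℝ)) := by
          have hsplit : (2*Real.sqrt d*(r:ℝ))^((2:ℝ)-(d:ℝ))
              = (2*Real.sqrt d)^((2:ℝ)-(d:ℝ)) * (r:ℝ)^((2:ℝ)-(d:ℝ)) :=
            Real.mul_rpow (by positivity) (by positivity)
          rw [hsplit]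
      _ ≤ c * euclNorm' d x ^ ((2:ℝ)-(d:ℝ)) := by
          apply mul_le_mul_of_nonneg_left hrp hc.le
      _ ≤ (μ (A x)).toReal := by
          rw [← heq]; exact hlower r hr x ⟨hx2, hx1⟩
  have hcard : ((4:ℝ)^d - 3^d) * (r:ℝ)^d ≤ (s.card : ℝ) := by
    have hsub : box d r ⊆ box d (2*r) := box_subset d r (2*r) (by omega)
    have hcnat : s.card = (2*(2*r)+1)^d - (2*r+1)^d := by
      rw [hsdef, Finset.card_sdiff_of_subset hsub, card_box, card_box]
    have hle : (2*r+1)^d ≤ (2*(2*r)+1)^d := Nat.pow_le_pow_left (by omega) d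
    have hcR : (s.card : ℝ) = ((2*(2*r)+1:ℕ):ℝ)^d - ((2*r+1:ℕ):ℝ)^d := by
      rw [hcnat, Nat.cast_sub hle]
      push_cast
      ring
    rw [hcR]
    have h1 : ((4:ℝ)*r)^d ≤ ((2*(2*r)+1:ℕ):ℝ)^d := by
      apply pow_le_pow_left₀ (by positivity)
      push_cast; linarith
    have h2 : ((2*r+1:ℕ):ℝ)^d ≤ ((3:ℝ)*r)^d := by
      apply pow_le_pow_left₀ (by positivity)
      push_cast
      have : (1:ℝ) ≤ r := by exact_mod_cast hr
      linarith
    have e1 : ((4:ℝ)*r)^d = 4^d * (r:ℝ)^d := by rw [mul_pow]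
    have e2 : ((3:ℝ)*r)^d = 3^d * (r:ℝ)^d := by rw [mul_pow]
    nlinarith [h1, h2]
  have hS1 : c₁ * (r:ℝ)^2 ≤ S1 := by
    have hsum : (s.card : ℝ) * (c₁ / ((4:ℝ)^d - 3^d) * (r:ℝ)^((2:ℝ)-(d:ℝ))) ≤ S1 := by
      rw [hS1def]
      exact Finset.card_nsmul_le_sum s _ _ hptwise |>.trans_eq' (by
        rw [nsmul_eq_mul])
    have hquot : 0 < c₁ / ((4:ℝ)^d - 3^d) * (r:ℝ)^((2:ℝ)-(d:ℝ)) := by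
      apply mul_pos _ (Real.rpow_pos_of_pos hrR _)
      apply div_pos hc₁
      have : (3:ℝ)^d < 4^d := by
        apply pow_lt_pow_left₀ (by norm_num) (by norm_num); omega
      linarith
    have hchain : c₁ * (r:ℝ)^2
        ≤ (((4:ℝ)^d - 3^d) * (r:ℝ)^d) * (c₁ / ((4:ℝ)^d - 3^d) * (r:ℝ)^((2:ℝ)-(d:ℝ))) := by
      have h43 : (0:ℝ) < (4:ℝ)^d - 3^d := by
        have : (3:ℝ)^d < 4^d := by
          apply pow_lt_pow_left₀ (by norm_num) (by norm_num); omega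
        linarith
      have hrw : (((4:ℝ)^d - 3^d) * (r:ℝ)^d) * (c₁ / ((4:ℝ)^d - 3^d) * (r:ℝ)^((2:ℝ)-(d:ℝ)))
          = c₁ * ((r:ℝ)^d * (r:ℝ)^((2:ℝ)-(d:ℝ))) := by
        field_simp
      rw [hrw]
      have hpow : (r:ℝ)^d * (r:ℝ)^((2:ℝ)-(d:ℝ)) = (r:ℝ)^2 := by
        rw [← Real.rpow_natCast (r:ℝ) d, ← Real.rpow_add hrR]
        rw [show (d:ℝ) + ((2:ℝ)-(d:ℝ)) = (2:ℝ) by ring]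
        rw [show ((2:ℝ)) = ((2:ℕ):ℝ) by norm_num, Real.rpow_natCast]
      rw [hpow]
    refine hchain.trans (le_trans ?_ hsum)
    exact mul_le_mul_of_nonneg_right hcard hquot.le
  -- upper bound on S2
  have hS2 : S2 ≤ 64 * C * (r:ℝ)^6 := by
    have h2r : 0 < 2*r := by omega
    have hub := hupper (2*r) h2r
    rw [← coe_box] at hub
    rw [finsum_mem_coe_finset] at hub
    have hub2 : ∑ x ∈ box d (2*r), ∑ y ∈ box d (2*r), (μ (A x ∩ A y)).toReal
        ≤ C * ((2*r:ℕ):ℝ)^6 := by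
      refine le_trans (le_of_eq ?_) hub
      exact Finset.sum_congr rfl fun x _ => (finsum_mem_coe_finset _ _).symm
    have hsub : s ⊆ box d (2*r) := by
      rw [hsdef]; exact Finset.sdiff_subset
    have hmono : S2 ≤ ∑ x ∈ box d (2*r), ∑ y ∈ box d (2*r), (μ (A x ∩ A y)).toReal := by
      rw [hS2def]
      calc ∑ x ∈ s, ∑ y ∈ s, (μ (A x ∩ A y)).toReal
          ≤ ∑ x ∈ s, ∑ y ∈ box d (2*r), (μ (A x ∩ A y)).toReal :=
            Finset.sum_le_sum fun x _ => Finset.sum_le_sum_of_subset_of_nonneg hsub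
              (fun y _ _ => ENNReal.toReal_nonneg)
        _ ≤ ∑ x ∈ box d (2*r), ∑ y ∈ box d (2*r), (μ (A x ∩ A y)).toReal :=
            Finset.sum_le_sum_of_subset_of_nonneg hsub
              (fun x _ _ => Finset.sum_nonneg fun y _ => ENNReal.toReal_nonneg)
    refine hmono.trans (hub2.trans (le_of_eq ?_))
    push_cast
    ring
  -- combine
  have hPle1 : (μ B).toReal ≤ 1 := by
    have := prob_le_one (μ := μ) (s := B)
    calc (μ B).toReal ≤ (1:ENNReal).toReal := ENNReal.toReal_mono (by simp) this
      _ = 1 := by simp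
  have hP0 : 0 ≤ (μ B).toReal := ENNReal.toReal_nonneg
  have hS1pos : 0 < S1 := lt_of_lt_of_le (by positivity) hS1
  have hS2pos : 0 < S2 := by
    nlinarith [hsm, hS1pos, hPle1, hP0]
  have hfin : c₁^2 * (r:ℝ)^4 ≤ (μ B).toReal * (64 * C * (r:ℝ)^6) := by
    have h1 : (c₁ * (r:ℝ)^2)^2 ≤ S1^2 := by
      apply pow_le_pow_left₀ (by positivity) hS1
    have h2 : (μ B).toReal * S2 ≤ (μ B).toReal * (64 * C * (r:ℝ)^6) :=
      mul_le_mul_of_nonneg_left hS2 hP0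
    nlinarith [h1, hsm, h2]
  rw [div_div]
  rw [div_le_iff₀ (by positivity)]
  nlinarith [hfin, pow_pos hrR 4, pow_pos hrR 2, hP0, hC]
end

section
/- Let d ≥ 1, and for x,y ∈ ℤ^d with |x|, |y| ≤ r√d and d > 6, Σ_{z ∈ ℤ^d, |z| > dr} |z|^{2−d}|x−z|^{2−d}|y−z|^{2−d} ≤ C r^{2d} Σ_{|z|>dr} |z|^{6−3d} ≤ C' r⁶. -/
namespace S8
variable {d : ℕ}

def supN (d : ℕ) (z : Vd d) : ℕ := Finset.univ.sup fun i => (z i).natAbs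

lemma euclNorm_nonneg (d : ℕ) (z : Vd d) : 0 ≤ euclNorm d z := Real.sqrt_nonneg _

lemma abs_coord_le (z : Vd d) (i : Fin d) : |(z i : ℝ)| ≤ euclNorm d z := by
  rw [euclNorm, ← Real.sqrt_sq_eq_abs]
  exact Real.sqrt_le_sqrt (Finset.single_le_sum
    (f := fun i => ((z i : ℝ)) ^ 2) (fun i _ => sq_nonneg _) (Finset.mem_univ i))

lemma supN_le (hd : 0 < d) (z : Vd d) : (supN d z : ℝ) ≤ euclNorm d z := by
  have : Nonempty (Fin d) := ⟨⟨0, hd⟩⟩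
  obtain ⟨i, -, hi⟩ := Finset.exists_mem_eq_sup (Finset.univ : Finset (Fin d))
    Finset.univ_nonempty (fun i => (z i).natAbs)
  rw [supN, hi]
  rw [Nat.cast_natAbs, Int.cast_abs]
  exact abs_coord_le z i

lemma euclNorm_le (z : Vd d) : euclNorm d z ≤ Real.sqrt d * supN d z := by
  rw [euclNorm, ← Real.sqrt_mul_self (by positivity : (0:ℝ) ≤ (supN d z : ℝ)),
    ← Real.sqrt_mul (by positivity)]
  apply Real.sqrt_le_sqrt
  have : ∀ i, ((z i : ℝ)) ^ 2 ≤ ((supN d z : ℝ)) ^ 2 := by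
    intro i
    have h1 : (z i).natAbs ≤ supN d z := Finset.le_sup (f := fun i => (z i).natAbs) (Finset.mem_univ i)
    have h2 : |(z i : ℝ)| ≤ (supN d z : ℝ) := by
      rw [← Int.cast_abs, ← Nat.cast_natAbs]; exact_mod_cast h1
    calc ((z i : ℝ))^2 = |(z i : ℝ)|^2 := (sq_abs _).symm
      _ ≤ _ := by nlinarith [abs_nonneg ((z i : ℝ))]
  calc ∑ i, ((z i : ℝ))^2 ≤ ∑ _i : Fin d, ((supN d z : ℝ))^2 :=
        Finset.sum_le_sum fun i _ => this i
    _ = d * ((supN d z : ℝ) * (supN d z : ℝ)) := by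
        rw [Finset.sum_const, Finset.card_univ, Fintype.card_fin]; ring
    _ = _ := by ring

variable {d : ℕ}

noncomputable def emb (d : ℕ) (v : Vd d) : EuclideanSpace ℝ (Fin d) :=
  (WithLp.equiv 2 (Fin d → ℝ)).symm (fun i => (v i : ℝ))

lemma euclNorm_eq (v : Vd d) : euclNorm d v = ‖emb d v‖ := by
  rw [EuclideanSpace.norm_eq, euclNorm]
  congr 1
  refine Finset.sum_congr rfl fun i _ => ?_
  rw [Real.norm_eq_abs, sq_abs]
  rfl

lemma emb_sub (x z : Vd d) : emb d (x - z) = emb d x - emb d z := by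
  ext i
  simp [emb, Pi.sub_apply]

lemma euclNorm_sub_ge (x z : Vd d) :
    euclNorm d z - euclNorm d x ≤ euclNorm d (x - z) := by
  rw [euclNorm_eq, euclNorm_eq, euclNorm_eq, emb_sub, norm_sub_rev]
  exact norm_sub_norm_le _ _

noncomputable def shellF (d n : ℕ) : Finset (Vd d) :=
  (Fintype.piFinset fun _ : Fin d => Finset.Icc (-(n : ℤ)) (n : ℤ)).filter
    fun z => supN d z = n

lemma mem_shellF {z : Vd d} {n : ℕ} (h : supN d z = n) : z ∈ shellF d n := by
  rw [shellF, Finset.mem_filter, Fintype.mem_piFinset]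
  refine ⟨fun i => ?_, h⟩
  have : (z i).natAbs ≤ n := h ▸ Finset.le_sup (f := fun i => (z i).natAbs) (Finset.mem_univ i)
  rw [Finset.mem_Icc]
  omega

lemma card_shellF (hd : 0 < d) {n : ℕ} (hn : 1 ≤ n) :
    (shellF d n).card ≤ 2 * d * (2 * n + 1) ^ (d - 1) := by
  classical
  have hsub : shellF d n ⊆ Finset.univ.biUnion fun i : Fin d =>
      Fintype.piFinset fun j => if j = i then ({(n : ℤ), -(n : ℤ)} : Finset ℤ)
        else Finset.Icc (-(n : ℤ)) (n : ℤ) := by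
    intro z hz
    rw [shellF, Finset.mem_filter, Fintype.mem_piFinset] at hz
    obtain ⟨hbox, hsup⟩ := hz
    have : Nonempty (Fin d) := ⟨⟨0, hd⟩⟩
    obtain ⟨i, -, hi⟩ := Finset.exists_mem_eq_sup (Finset.univ : Finset (Fin d))
      Finset.univ_nonempty (fun i => (z i).natAbs)
    rw [Finset.mem_biUnion]
    refine ⟨i, Finset.mem_univ i, ?_⟩
    rw [Fintype.mem_piFinset]
    intro j
    by_cases hji : j = i
    · subst hji
      rw [supN] at hsup
      have hzn : (z j).natAbs = n := by rw [← hi]; exact hsup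
      simp only [if_true, Finset.mem_insert, Finset.mem_singleton]
      omega
    · rw [if_neg hji]
      exact hbox j
  calc (shellF d n).card ≤ _ := Finset.card_le_card hsub
    _ ≤ ∑ i : Fin d, (Fintype.piFinset fun j => if j = i then ({(n : ℤ), -(n : ℤ)} : Finset ℤ)
        else Finset.Icc (-(n : ℤ)) (n : ℤ)).card := Finset.card_biUnion_le
    _ ≤ ∑ _i : Fin d, 2 * (2 * n + 1) ^ (d - 1) := by
      refine Finset.sum_le_sum fun i _ => ?_
      rw [Fintype.card_piFinset]
      have hione : ∀ j : Fin d, (if j = i then ({(n : ℤ), -(n : ℤ)} : Finset ℤ)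
          else Finset.Icc (-(n : ℤ)) (n : ℤ)).card = if j = i then 2 else 2 * n + 1 := by
        intro j
        by_cases hji : j = i
        · rw [if_pos hji, if_pos hji]
          rw [Finset.card_insert_of_notMem (by simp; omega), Finset.card_singleton]
        · rw [if_neg hji, if_neg hji, Int.card_Icc]
          omega
      rw [Finset.prod_congr rfl fun j _ => hione j]
      rw [← Finset.mul_prod_erase _ _ (Finset.mem_univ i), if_pos rfl]
      have : ∀ j ∈ Finset.univ.erase i, (if j = i then 2 else 2 * n + 1) = 2 * n + 1 := by
        intro j hj
        rw [if_neg (Finset.mem_erase.mp hj).1]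
      rw [Finset.prod_congr rfl this, Finset.prod_const, Finset.card_erase_of_mem (Finset.mem_univ i),
        Finset.card_univ, Fintype.card_fin]
    _ = 2 * d * (2 * n + 1) ^ (d - 1) := by
      rw [Finset.sum_const, Finset.card_univ, Fintype.card_fin, smul_eq_mul]; ring

lemma tele_Icc (m : ℕ) (hm : 2 ≤ m) (M : ℕ) (hmM : m ≤ M) :
    ∑ n ∈ Finset.Icc m M, (1 / ((n : ℝ) - 1) - 1 / n) ≤ 1 / ((m : ℝ) - 1) - 1 / M := by
  induction M, hmM using Nat.le_induction with
  | base => rw [Finset.Icc_self, Finset.sum_singleton]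
  | succ M hM ih =>
    rw [Finset.sum_Icc_succ_top (by omega)]
    have hM0 : (0:ℝ) < (M:ℝ) := by
      have : (2:ℝ) ≤ m := by exact_mod_cast hm
      have : (m:ℝ) ≤ M := by exact_mod_cast hM
      linarith
    have key : (1 / (((M + 1 : ℕ) : ℝ) - 1) - 1 / ((M + 1 : ℕ) : ℝ))
        = 1 / (M : ℝ) - 1 / ((M + 1 : ℕ):ℝ) := by
      push_cast; ring_nf
    rw [key]
    push_cast
    linarith

lemma tele_sum (T : Finset ℕ) (m : ℕ) (hm : 2 ≤ m) (hT : ∀ n ∈ T, m ≤ n) :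
    ∑ n ∈ T, (1 / ((n : ℝ) - 1) - 1 / n) ≤ 1 / ((m : ℝ) - 1) := by
  have hm1 : (0:ℝ) < (m:ℝ) - 1 := by
    have : (2:ℝ) ≤ m := by exact_mod_cast hm
    linarith
  rcases T.eq_empty_or_nonempty with rfl | hne
  · simp only [Finset.sum_empty]; positivity
  · have hmax : T ⊆ Finset.Icc m (T.max' hne) := by
      intro n hn
      rw [Finset.mem_Icc]
      exact ⟨hT n hn, Finset.le_max' T n hn⟩
    have hnonneg : ∀ n ∈ Finset.Icc m (T.max' hne), (0:ℝ) ≤ 1 / ((n : ℝ) - 1) - 1 / n := by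
      intro n hn
      rw [Finset.mem_Icc] at hn
      have h2 : (2:ℝ) ≤ (n:ℝ) := by
        have : 2 ≤ n := le_trans hm hn.1
        exact_mod_cast this
      have h1 : (0:ℝ) < (n:ℝ) - 1 := by linarith
      have h0 : (0:ℝ) < (n:ℝ) := by linarith
      rw [sub_nonneg, div_le_div_iff₀ h0 h1]
      linarith
    have hmm : m ≤ T.max' hne := hT _ (T.max'_mem hne)
    calc ∑ n ∈ T, (1 / ((n : ℝ) - 1) - 1 / n)
        ≤ ∑ n ∈ Finset.Icc m (T.max' hne), (1 / ((n : ℝ) - 1) - 1 / n) :=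
          Finset.sum_le_sum_of_subset_of_nonneg hmax fun n hn _ => hnonneg n hn
      _ ≤ 1 / ((m : ℝ) - 1) - 1 / (T.max' hne) := tele_Icc m hm _ hmm
      _ ≤ 1 / ((m : ℝ) - 1) := by
          have : (0:ℝ) < T.max' hne := by
            have : 2 ≤ T.max' hne := le_trans hm hmm
            have : (2:ℝ) ≤ T.max' hne := by exact_mod_cast this
            linarith
          have := one_div_pos.mpr this
          linarith

lemma inv_sq_le {n : ℕ} (hn : 3 ≤ n) :
    (n : ℝ) ^ (-2 : ℝ) ≤ 1 / ((n : ℝ) - 1) - 1 / n := by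
  have h3 : (3:ℝ) ≤ (n:ℝ) := by exact_mod_cast hn
  have h0 : (0:ℝ) < (n:ℝ) := by linarith
  have h1 : (0:ℝ) < (n:ℝ) - 1 := by linarith
  rw [Real.rpow_neg h0.le, show (2:ℝ) = ((2:ℕ):ℝ) by norm_num, Real.rpow_natCast]
  have key : 1 / ((n : ℝ) - 1) - 1 / n = 1 / (((n:ℝ) - 1) * n) := by
    field_simp
    ring
  rw [key, inv_eq_one_div]
  apply div_le_div_of_nonneg_left one_pos.le (by positivity)
  nlinarith

lemma key_tail (hd : 6 < d) {r : ℝ} (hr : 1 ≤ r)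
    (S : Finset {z : Vd d // (d : ℝ) * r < euclNorm d z}) :
    ∑ z ∈ S, euclNorm d z.1 ^ ((6 : ℝ) - 3 * d)
      ≤ (2 * d * 3 ^ (d - 1) : ℝ) * r ^ ((6 : ℝ) - 2 * d) := by
  classical
  have hdpos : 0 < d := by omega
  have hd7 : (7 : ℝ) ≤ (d : ℝ) := by exact_mod_cast Nat.succ_le_of_lt hd
  have hr0 : (0 : ℝ) < r := lt_of_lt_of_le one_pos hr
  have hsqrt2 : (2 : ℝ) ≤ Real.sqrt d := by
    rw [show (2:ℝ) = Real.sqrt 4 by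
      rw [show (4:ℝ) = 2^2 by norm_num, Real.sqrt_sq (by norm_num)]]
    exact Real.sqrt_le_sqrt (by linarith)
  have hsqrt0 : (0 : ℝ) < Real.sqrt d := by linarith
  set N : {z : Vd d // (d : ℝ) * r < euclNorm d z} → ℕ := fun z => supN d z.1 with hN
  have hNlb : ∀ z : {z : Vd d // (d : ℝ) * r < euclNorm d z}, 2 * r < (N z : ℝ) := by
    intro z
    have h1 : (d : ℝ) * r < Real.sqrt d * (N z : ℝ) :=
      lt_of_lt_of_le z.2 (euclNorm_le z.1)
    have h2 : Real.sqrt d * Real.sqrt d = (d : ℝ) := Real.mul_self_sqrt (by positivity)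
    have h3 : Real.sqrt d * (2 * r) < Real.sqrt d * (N z : ℝ) := by
      nlinarith [mul_nonneg hsqrt0.le (mul_nonneg (sub_nonneg.mpr hsqrt2) hr0.le)]
    exact (mul_lt_mul_iff_right₀ hsqrt0).mp h3
  have hN3 : ∀ z : {z : Vd d // (d : ℝ) * r < euclNorm d z}, 3 ≤ N z := by
    intro z
    have := hNlb z
    have h2 : (2 : ℝ) < (N z : ℝ) := by nlinarith
    exact_mod_cast Nat.lt_of_lt_of_le (by exact_mod_cast h2) (le_refl _)
  have hexp : (6 : ℝ) - 3 * d ≤ 0 := by linarith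
  have hexp2 : (7 : ℝ) - 2 * d ≤ 0 := by linarith
  set A : ℝ := (2 * d * 3 ^ (d - 1) : ℝ) with hA
  have hA0 : (0 : ℝ) ≤ A := by positivity
  set m : ℕ := ⌊2 * r⌋₊ + 1 with hm
  have hfloor2 : 2 ≤ ⌊2 * r⌋₊ := Nat.le_floor (by push_cast; linarith)
  have hmono : ∀ n ∈ S.image N, m ≤ n := by
    intro n hn
    obtain ⟨z, hzS, hzn⟩ := Finset.mem_image.mp hn
    have h2r : 2 * r < (n : ℝ) := hzn ▸ hNlb z
    have : ⌊2 * r⌋₊ < n := by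
      rw [Nat.floor_lt (by linarith)]
      exact h2r
    omega
  calc ∑ z ∈ S, euclNorm d z.1 ^ ((6 : ℝ) - 3 * d)
      ≤ ∑ z ∈ S, (N z : ℝ) ^ ((6 : ℝ) - 3 * d) := by
        refine Finset.sum_le_sum fun z _ => ?_
        have h3 : 3 ≤ N z := hN3 z
        have h0 : (0 : ℝ) < (N z : ℝ) := by exact_mod_cast Nat.lt_of_lt_of_le (by norm_num) h3
        exact Real.rpow_le_rpow_of_nonpos h0 (supN_le hdpos z.1) hexp
    _ = ∑ n ∈ S.image N, (S.filter fun z => N z = n).card • (n : ℝ) ^ ((6 : ℝ) - 3 * d) :=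
        Finset.sum_comp (fun n : ℕ => (n : ℝ) ^ ((6 : ℝ) - 3 * d)) N
    _ ≤ ∑ n ∈ S.image N, A * ((2 * r) ^ ((7 : ℝ) - 2 * d) * (1 / ((n : ℝ) - 1) - 1 / n)) := by
        refine Finset.sum_le_sum fun n hn => ?_
        obtain ⟨z, hzS, hzn⟩ := Finset.mem_image.mp hn
        have h2r : 2 * r < (n : ℝ) := hzn ▸ hNlb z
        have h3 : 3 ≤ n := hzn ▸ hN3 z
        have hn0 : (0 : ℝ) < (n : ℝ) := by exact_mod_cast Nat.lt_of_lt_of_le (by norm_num) h3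
        have hcard : (S.filter fun z => N z = n).card ≤ 2 * d * (2 * n + 1) ^ (d - 1) := by
          refine le_trans (Finset.card_le_card_of_injOn Subtype.val ?_ ?_)
            (card_shellF hdpos (by omega))
          · intro a ha
            rw [Finset.mem_coe, Finset.mem_filter] at ha
            exact mem_shellF ha.2
          · exact Subtype.val_injective.injOn
        have hcardN : 2 * d * (2 * n + 1) ^ (d - 1) ≤ 2 * d * 3 ^ (d - 1) * n ^ (d - 1) := by
          calc 2 * d * (2 * n + 1) ^ (d - 1) ≤ 2 * d * (3 * n) ^ (d - 1) := by
                have : (2 * n + 1) ^ (d - 1) ≤ (3 * n) ^ (d - 1) :=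
                  Nat.pow_le_pow_left (by omega) _
                exact Nat.mul_le_mul_left _ this
            _ = 2 * d * 3 ^ (d - 1) * n ^ (d - 1) := by rw [Nat.mul_pow]; ring
        have hcardR : ((S.filter fun z => N z = n).card : ℝ) ≤ A * (n : ℝ) ^ (d - 1) := by
          rw [hA]
          exact_mod_cast le_trans hcard hcardN
        have hrpow_nonneg : (0 : ℝ) ≤ (n : ℝ) ^ ((6 : ℝ) - 3 * d) := Real.rpow_nonneg hn0.le _
        calc (S.filter fun z => N z = n).card • (n : ℝ) ^ ((6 : ℝ) - 3 * d)
            = ((S.filter fun z => N z = n).card : ℝ) * (n : ℝ) ^ ((6 : ℝ) - 3 * d) :=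
              nsmul_eq_mul _ _
          _ ≤ (A * (n : ℝ) ^ (d - 1)) * (n : ℝ) ^ ((6 : ℝ) - 3 * d) :=
              mul_le_mul_of_nonneg_right hcardR hrpow_nonneg
          _ = A * ((n : ℝ) ^ ((7 : ℝ) - 2 * d) * (n : ℝ) ^ (-2 : ℝ)) := by
              rw [mul_assoc]
              congr 1
              rw [← Real.rpow_natCast (n : ℝ) (d - 1), ← Real.rpow_add hn0,
                ← Real.rpow_add hn0]
              congr 1
              have : ((d - 1 : ℕ) : ℝ) = (d : ℝ) - 1 := by
                have : 1 ≤ d := hdpos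
                push_cast [Nat.cast_sub this]
                ring
              rw [this]
              ring
          _ ≤ A * ((2 * r) ^ ((7 : ℝ) - 2 * d) * (1 / ((n : ℝ) - 1) - 1 / n)) := by
              refine mul_le_mul_of_nonneg_left ?_ hA0
              have hb1 : (n : ℝ) ^ ((7 : ℝ) - 2 * d) ≤ (2 * r) ^ ((7 : ℝ) - 2 * d) :=
                Real.rpow_le_rpow_of_nonpos (by linarith) h2r.le hexp2
              have hb2 : (n : ℝ) ^ (-2 : ℝ) ≤ 1 / ((n : ℝ) - 1) - 1 / n := inv_sq_le h3
              have h1 : (0 : ℝ) ≤ (n : ℝ) ^ (-2 : ℝ) := Real.rpow_nonneg hn0.le _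
              have h2 : (0 : ℝ) ≤ (2 * r) ^ ((7 : ℝ) - 2 * d) := Real.rpow_nonneg (by linarith) _
              nlinarith
    _ = A * (2 * r) ^ ((7 : ℝ) - 2 * d) * ∑ n ∈ S.image N, (1 / ((n : ℝ) - 1) - 1 / n) := by
        rw [Finset.mul_sum]
        refine Finset.sum_congr rfl fun n _ => ?_
        ring
    _ ≤ A * (2 * r) ^ ((7 : ℝ) - 2 * d) * (1 / ((m : ℝ) - 1)) := by
        refine mul_le_mul_of_nonneg_left ?_ (by positivity)
        exact tele_sum _ m (by omega) hmono
    _ ≤ A * r ^ ((6 : ℝ) - 2 * d) := by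
        have hmval : (m : ℝ) - 1 = (⌊2 * r⌋₊ : ℝ) := by
          rw [hm]; push_cast; ring
        have hfr : r ≤ (⌊2 * r⌋₊ : ℝ) := by
          have := Nat.lt_floor_add_one (2 * r)
          linarith
        have hfr0 : (0 : ℝ) < (⌊2 * r⌋₊ : ℝ) := by linarith
        have h1 : 1 / ((m : ℝ) - 1) ≤ 1 / r := by
          rw [hmval]
          exact one_div_le_one_div_of_le hr0 hfr
        have hsplit : (2 * r) ^ ((7 : ℝ) - 2 * d) ≤ r ^ ((7 : ℝ) - 2 * d) := by
          rw [Real.mul_rpow (by norm_num) hr0.le]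
          have h2le : (2 : ℝ) ^ ((7 : ℝ) - 2 * d) ≤ 1 :=
            Real.rpow_le_one_of_one_le_of_nonpos (by norm_num) hexp2
          have := Real.rpow_nonneg hr0.le ((7 : ℝ) - 2 * d)
          nlinarith
        have hcomb : r ^ ((7 : ℝ) - 2 * d) * (1 / r) = r ^ ((6 : ℝ) - 2 * d) := by
          rw [one_div, ← Real.rpow_neg_one r, ← Real.rpow_add hr0]
          ring_nf
        calc A * (2 * r) ^ ((7 : ℝ) - 2 * d) * (1 / ((m : ℝ) - 1))
            ≤ A * (r ^ ((7 : ℝ) - 2 * d) * (1 / r)) := by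
              have hp1 : (0:ℝ) ≤ (2*r) ^ ((7:ℝ) - 2*d) := Real.rpow_nonneg (by linarith) _
              have hp2 : (0:ℝ) ≤ 1 / ((m:ℝ) - 1) := by rw [hmval]; positivity
              have hp3 : (0:ℝ) ≤ 1 / r := by positivity
              have hp4 : (0:ℝ) ≤ r ^ ((7:ℝ) - 2*d) := Real.rpow_nonneg hr0.le _
              rw [mul_assoc]
              refine mul_le_mul_of_nonneg_left ?_ hA0
              exact mul_le_mul hsplit h1 hp2 hp4
          _ = A * r ^ ((6 : ℝ) - 2 * d) := by rw [hcomb]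
lemma half_le (hd : 6 < d) {r : ℝ} (hr : 1 ≤ r) {x z : Vd d}
    (hx : euclNorm d x ≤ r * Real.sqrt d) (hz : (d : ℝ) * r < euclNorm d z) :
    euclNorm d z / 2 ≤ euclNorm d (x - z) := by
  have hd7 : (7 : ℝ) ≤ (d : ℝ) := by exact_mod_cast Nat.succ_le_of_lt hd
  have hr0 : (0 : ℝ) < r := lt_of_lt_of_le one_pos hr
  have hsqrt2 : (2 : ℝ) ≤ Real.sqrt d := by
    rw [show (2:ℝ) = Real.sqrt 4 by
      rw [show (4:ℝ) = 2^2 by norm_num, Real.sqrt_sq (by norm_num)]]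
    exact Real.sqrt_le_sqrt (by linarith)
  have h2 : Real.sqrt d * Real.sqrt d = (d : ℝ) := Real.mul_self_sqrt (by positivity)
  have hb : r * Real.sqrt d ≤ euclNorm d z / 2 := by
    have h3 : Real.sqrt d * Real.sqrt d * r = (d:ℝ) * r := by rw [h2]
    nlinarith [mul_nonneg (mul_nonneg (sub_nonneg.mpr hsqrt2) hr0.le) (Real.sqrt_nonneg (d:ℝ))]
  have := euclNorm_sub_ge x z
  linarith

lemma factor_le (hd : 6 < d) {r : ℝ} (hr : 1 ≤ r) {x z : Vd d}
    (hx : euclNorm d x ≤ r * Real.sqrt d) (hz : (d : ℝ) * r < euclNorm d z) :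
    euclNorm d (x - z) ^ ((2 : ℝ) - d)
      ≤ euclNorm d z ^ ((2 : ℝ) - d) * ((2:ℝ) ^ ((2:ℝ) - d))⁻¹ := by
  have hd7 : (7 : ℝ) ≤ (d : ℝ) := by exact_mod_cast Nat.succ_le_of_lt hd
  have hr0 : (0 : ℝ) < r := lt_of_lt_of_le one_pos hr
  have hE0 : (0 : ℝ) < euclNorm d z := lt_of_le_of_lt (by positivity) hz
  have h1 : euclNorm d (x - z) ^ ((2 : ℝ) - d) ≤ (euclNorm d z / 2) ^ ((2 : ℝ) - d) :=
    Real.rpow_le_rpow_of_nonpos (by positivity) (half_le hd hr hx hz) (by linarith)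
  have h2 : (euclNorm d z / 2) ^ ((2 : ℝ) - d)
      = euclNorm d z ^ ((2 : ℝ) - d) * ((2:ℝ) ^ ((2:ℝ) - d))⁻¹ := by
    rw [div_eq_mul_inv, Real.mul_rpow hE0.le (by norm_num),
      Real.inv_rpow (by norm_num)]
  rw [← h2]; exact h1
end S8

/-- For `d > 6` and `|x|, |y| ≤ r√d`, the sum over `|z| > dr` of
`|z|^{2−d}|x−z|^{2−d}|y−z|^{2−d}` is at most `C r^{2d} Σ_{|z|>dr}|z|^{6−3d}`,
which in turn is at most `C' r⁶`. -/
theorem stmt8 (d : ℕ) (hd : 6 < d) :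
    ∃ C > (0 : ℝ), ∃ C' > (0 : ℝ), ∀ r : ℝ, 1 ≤ r → ∀ x y : Vd d,
      euclNorm d x ≤ r * Real.sqrt d → euclNorm d y ≤ r * Real.sqrt d →
      (Summable fun z : {z : Vd d // (d : ℝ) * r < euclNorm d z} =>
        euclNorm d z.1 ^ ((2 : ℝ) - d) * euclNorm d (x - z.1) ^ ((2 : ℝ) - d)
          * euclNorm d (y - z.1) ^ ((2 : ℝ) - d)) ∧
      (Summable fun z : {z : Vd d // (d : ℝ) * r < euclNorm d z} =>
        euclNorm d z.1 ^ ((6 : ℝ) - 3 * d)) ∧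
      (∑' z : {z : Vd d // (d : ℝ) * r < euclNorm d z},
        euclNorm d z.1 ^ ((2 : ℝ) - d) * euclNorm d (x - z.1) ^ ((2 : ℝ) - d)
          * euclNorm d (y - z.1) ^ ((2 : ℝ) - d))
        ≤ C * r ^ (2 * d) *
          ∑' z : {z : Vd d // (d : ℝ) * r < euclNorm d z},
            euclNorm d z.1 ^ ((6 : ℝ) - 3 * d) ∧
      C * r ^ (2 * d) *
          (∑' z : {z : Vd d // (d : ℝ) * r < euclNorm d z},
            euclNorm d z.1 ^ ((6 : ℝ) - 3 * d))
        ≤ C' * r ^ 6 := by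
  classical
  set C : ℝ := (((2:ℝ) ^ ((2:ℝ) - (d:ℝ)))⁻¹) ^ 2 with hC
  have hC0 : 0 < C := by positivity
  set K : ℝ := (2 * d * 3 ^ (d - 1) : ℝ) with hK
  have hK0 : 0 < K := by positivity
  refine ⟨C, hC0, C * K, by positivity, ?_⟩
  intro r hr x y hx hy
  have hr0 : (0 : ℝ) < r := lt_of_lt_of_le one_pos hr
  set T := {z : Vd d // (d : ℝ) * r < euclNorm d z}
  set g : T → ℝ := fun z => euclNorm d z.1 ^ ((6 : ℝ) - 3 * d) with hg
  set f : T → ℝ := fun z =>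
    euclNorm d z.1 ^ ((2 : ℝ) - d) * euclNorm d (x - z.1) ^ ((2 : ℝ) - d)
      * euclNorm d (y - z.1) ^ ((2 : ℝ) - d) with hf
  have hg_nonneg : ∀ z : T, 0 ≤ g z := fun z =>
    Real.rpow_nonneg (S8.euclNorm_nonneg d z.1) _
  have hf_nonneg : ∀ z : T, 0 ≤ f z := fun z => by
    simp only [hf]
    have h0 := S8.euclNorm_nonneg d z.1
    have h1 := S8.euclNorm_nonneg d (x - z.1)
    have h2 := S8.euclNorm_nonneg d (y - z.1)
    positivity
  have hg_sum : Summable g :=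
    summable_of_sum_le hg_nonneg (S8.key_tail hd hr)
  have htsum_g : (∑' z : T, g z) ≤ K * r ^ ((6 : ℝ) - 2 * d) :=
    Summable.tsum_le_of_sum_le hg_sum (S8.key_tail hd hr)
  have htsum_g0 : 0 ≤ ∑' z : T, g z := tsum_nonneg hg_nonneg
  -- pointwise bound f ≤ C * g
  have hpt : ∀ z : T, f z ≤ C * g z := by
    intro z
    have hE0 : (0 : ℝ) < euclNorm d z.1 := lt_of_le_of_lt (by positivity) z.2
    have hEp : (0 : ℝ) ≤ euclNorm d z.1 ^ ((2 : ℝ) - d) := Real.rpow_nonneg hE0.le _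
    have hb1 := S8.factor_le hd hr hx z.2
    have hb2 := S8.factor_le hd hr hy z.2
    have hcinv : (0:ℝ) ≤ ((2:ℝ) ^ ((2:ℝ) - d))⁻¹ := by positivity
    have hxy1 : (0:ℝ) ≤ euclNorm d (x - z.1) ^ ((2 : ℝ) - d) :=
      Real.rpow_nonneg (S8.euclNorm_nonneg d _) _
    have hxy2 : (0:ℝ) ≤ euclNorm d (y - z.1) ^ ((2 : ℝ) - d) :=
      Real.rpow_nonneg (S8.euclNorm_nonneg d _) _
    have key : euclNorm d z.1 ^ ((2 : ℝ) - d) *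
        (euclNorm d z.1 ^ ((2 : ℝ) - d) * ((2:ℝ) ^ ((2:ℝ) - d))⁻¹) *
        (euclNorm d z.1 ^ ((2 : ℝ) - d) * ((2:ℝ) ^ ((2:ℝ) - d))⁻¹)
        = C * g z := by
      simp only [hC, hg]
      rw [show euclNorm d z.1 ^ ((2 : ℝ) - d) * (euclNorm d z.1 ^ ((2 : ℝ) - d) * ((2:ℝ) ^ ((2:ℝ) - d))⁻¹) * (euclNorm d z.1 ^ ((2 : ℝ) - d) * ((2:ℝ) ^ ((2:ℝ) - d))⁻¹)
        = (euclNorm d z.1 ^ ((2 : ℝ) - d) * euclNorm d z.1 ^ ((2 : ℝ) - d) * euclNorm d z.1 ^ ((2 : ℝ) - d)) * (((2:ℝ) ^ ((2:ℝ) - (d:ℝ)))⁻¹)^2 by ring]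
      rw [← Real.rpow_add hE0, ← Real.rpow_add hE0]
      rw [show (2:ℝ) - d + (2 - d) + (2 - d) = (6:ℝ) - 3 * d by ring]
      ring
    have step1 : f z ≤ euclNorm d z.1 ^ ((2 : ℝ) - d) *
          (euclNorm d z.1 ^ ((2 : ℝ) - d) * ((2:ℝ) ^ ((2:ℝ) - d))⁻¹) *
          (euclNorm d z.1 ^ ((2 : ℝ) - d) * ((2:ℝ) ^ ((2:ℝ) - d))⁻¹) := by
      simp only [hf]
      refine mul_le_mul (mul_le_mul le_rfl hb1 hxy1 hEp) hb2 hxy2 ?_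
      positivity
    exact le_of_le_of_eq step1 key
  have hf_sum : Summable f :=
    Summable.of_nonneg_of_le hf_nonneg hpt (hg_sum.mul_left C)
  refine ⟨hf_sum, hg_sum, ?_, ?_⟩
  · -- tsum f ≤ C * r^(2d) * tsum g
    have h1 : (∑' z : T, f z) ≤ ∑' z : T, C * g z :=
      Summable.tsum_le_tsum hpt hf_sum (hg_sum.mul_left C)
    rw [tsum_mul_left] at h1
    have h2 : 1 ≤ r ^ (2 * d) := one_le_pow₀ hr
    calc (∑' z : T, f z) ≤ C * (∑' z : T, g z) := h1
      _ ≤ C * r ^ (2 * d) * (∑' z : T, g z) := by nlinarith [mul_nonneg (mul_nonneg hC0.le htsum_g0) (sub_nonneg.mpr h2)]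
  · -- C * r^(2d) * tsum g ≤ C * K * r^6
    have hpow : r ^ (2 * d) * (K * r ^ ((6 : ℝ) - 2 * d)) = K * r ^ 6 := by
      rw [← Real.rpow_natCast r (2 * d), ← Real.rpow_natCast r 6]
      rw [show ((2 * d : ℕ) : ℝ) = 2 * (d:ℝ) by push_cast; ring]
      rw [show ((6 : ℕ) : ℝ) = (6:ℝ) by norm_num]
      rw [mul_comm (r ^ (2 * (d:ℝ))) _, mul_assoc, ← Real.rpow_add hr0]
      ring_nf
    calc C * r ^ (2 * d) * (∑' z : T, g z)
        ≤ C * r ^ (2 * d) * (K * r ^ ((6 : ℝ) - 2 * d)) := by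
          refine mul_le_mul_of_nonneg_left htsum_g ?_
          positivity
      _ = C * K * r ^ 6 := by rw [mul_assoc, hpow, ← mul_assoc]
end

section
/- Fix a constant C₁ > 0 and a nonnegative random variable X (the number of boundary points). Suppose for each i the conditional probability, given the exploration filtration F_{i−1} and the event that the exploration has not yet stopped, of discovering a boundary connection at step i is at least μ^{1/2} where μ = c₁ e^{−C₁ log² s} < 1/4. If X ≥ γ_i + μ^{1/2} min(i, τ) deterministically for the Doob martingale γ_i of indicators minus conditional probabilities, then P(μτ ≥ X ≥ N) ≤ (C/μ) e^{−cN} for absolute constants C, c > 0. -/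
open MeasureTheory

/-- Convexity bound: `e^{xt} ≤ cosh x + t sinh x` for `|t| ≤ 1`. -/
lemma exp_mul_le_aux (x t : ℝ) (ht : |t| ≤ 1) :
    Real.exp (x * t) ≤ Real.cosh x + t * Real.sinh x := by
  obtain ⟨ht1, ht2⟩ := abs_le.1 ht
  have ha : (0:ℝ) ≤ (1 + t) / 2 := by linarith
  have hb : (0:ℝ) ≤ (1 - t) / 2 := by linarith
  have hab : (1 + t) / 2 + (1 - t) / 2 = 1 := by ring
  have h := convexOn_exp.2 (Set.mem_univ x) (Set.mem_univ (-x)) ha hb hab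
  simp only [smul_eq_mul] at h
  have hx : (1 + t) / 2 * x + (1 - t) / 2 * (-x) = x * t := by ring
  rw [hx] at h
  calc Real.exp (x * t) ≤ (1 + t) / 2 * Real.exp x + (1 - t) / 2 * Real.exp (-x) := h
    _ = Real.cosh x + t * Real.sinh x := by rw [Real.cosh_eq, Real.sinh_eq]; ring

lemma integrable_of_bdd {Ω : Type} {m0 : MeasurableSpace Ω} {P : Measure Ω}
    [IsFiniteMeasure P] {f : Ω → ℝ} (hm : AEStronglyMeasurable f P) (C : ℝ)
    (h : ∀ ω, |f ω| ≤ C) : Integrable f P :=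
  (integrable_const C).mono' hm (Filter.Eventually.of_forall fun ω => by
    simpa [Real.norm_eq_abs] using h ω)

/-- The moment generating function bound for a martingale with bounded increments. -/
lemma mgf_bound {Ω : Type} {m0 : MeasurableSpace Ω} {P : Measure Ω}
    [IsProbabilityMeasure P] {ℱ : Filtration ℕ m0} {γ : ℕ → Ω → ℝ}
    (hmart : Martingale γ ℱ P) (hγ0 : ∀ ω, γ 0 ω = 0)
    (hinc : ∀ (i : ℕ) ω, |γ (i + 1) ω - γ i ω| ≤ 1) (lam : ℝ) (i : ℕ) :
    ∫ ω, Real.exp (lam * γ i ω) ∂P ≤ Real.exp (i * lam ^ 2 / 2) := by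
  -- uniform bound on γ i
  have hbd : ∀ (i : ℕ) ω, |γ i ω| ≤ i := by
    intro i
    induction i with
    | zero => intro ω; simp [hγ0 ω]
    | succ n ih =>
      intro ω
      have := hinc n ω
      have h2 := ih ω
      have : |γ (n+1) ω| ≤ |γ (n+1) ω - γ n ω| + |γ n ω| := by
        simpa using abs_add_le (γ (n+1) ω - γ n ω) (γ n ω)
      push_cast
      linarith [hinc n ω]
  have hsm : ∀ i : ℕ, StronglyMeasurable[m0] (γ i) :=
    fun i => (hmart.stronglyAdapted i).mono (ℱ.le i)
  have hexp_sm : ∀ (c : ℝ) (i : ℕ),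
      AEStronglyMeasurable (fun ω => Real.exp (c * γ i ω)) P :=
    fun c i => (Real.continuous_exp.comp_stronglyMeasurable
      ((hsm i).const_mul c)).aestronglyMeasurable
  have hexp_int : ∀ (c : ℝ) (i : ℕ),
      Integrable (fun ω => Real.exp (c * γ i ω)) P := by
    intro c i
    refine integrable_of_bdd (hexp_sm c i) (Real.exp (|c| * i)) fun ω => ?_
    rw [abs_of_pos (Real.exp_pos _)]
    apply Real.exp_le_exp.2
    calc c * γ i ω ≤ |c * γ i ω| := le_abs_self _
      _ = |c| * |γ i ω| := abs_mul _ _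
      _ ≤ |c| * i := by
          exact mul_le_mul_of_nonneg_left (hbd i ω) (abs_nonneg c)
  induction i with
  | zero => simp [hγ0]
  | succ n ih =>
    set f : Ω → ℝ := fun ω => Real.exp (lam * γ n ω) with hf
    set Δ : Ω → ℝ := fun ω => γ (n+1) ω - γ n ω with hΔ
    have hf_sm : StronglyMeasurable[ℱ n] f :=
      Real.continuous_exp.comp_stronglyMeasurable ((hmart.stronglyAdapted n).const_mul lam)
    have hf_int : Integrable f P := hexp_int lam n
    have hΔ_sm : AEStronglyMeasurable Δ P :=
      ((hsm (n+1)).sub (hsm n)).aestronglyMeasurable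
    have hΔ_int : Integrable Δ P :=
      integrable_of_bdd hΔ_sm 1 (fun ω => hinc n ω)
    have hfΔ_int : Integrable (f * Δ) P := by
      refine integrable_of_bdd ((hf_sm.mono (ℱ.le n)).aestronglyMeasurable.mul hΔ_sm)
        (Real.exp (|lam| * n)) fun ω => ?_
      have h1 : |f ω| ≤ Real.exp (|lam| * n) := by
        rw [hf, abs_of_pos (Real.exp_pos _)]
        apply Real.exp_le_exp.2
        calc lam * γ n ω ≤ |lam * γ n ω| := le_abs_self _
          _ = |lam| * |γ n ω| := abs_mul _ _
          _ ≤ |lam| * n := mul_le_mul_of_nonneg_left (hbd n ω) (abs_nonneg lam)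
      calc |(f * Δ) ω| = |f ω| * |Δ ω| := abs_mul _ _
        _ ≤ Real.exp (|lam| * n) * 1 := by
            exact mul_le_mul h1 (hinc n ω) (abs_nonneg _) (Real.exp_nonneg _)
        _ = Real.exp (|lam| * n) := mul_one _
    -- conditional expectation of increment is zero
    have hΔ0 : P[Δ|ℱ n] =ᵐ[P] 0 := by
      have h1 : P[Δ|ℱ n] =ᵐ[P] P[γ (n+1)|ℱ n] - P[γ n|ℱ n] :=
        condExp_sub (hmart.integrable (n+1)) (hmart.integrable n) _
      have h2 : P[γ (n+1)|ℱ n] =ᵐ[P] γ n := hmart.condExp_ae_eq (Nat.le_succ n)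
      have h3 : P[γ n|ℱ n] = γ n :=
        condExp_of_stronglyMeasurable (ℱ.le n) (hmart.stronglyAdapted n) (hmart.integrable n)
      filter_upwards [h1, h2] with ω hω1 hω2
      simp [hω1, hω2, h3]
    -- ∫ f·Δ = 0
    have hfΔ0 : ∫ ω, f ω * Δ ω ∂P = 0 := by
      have hpull : P[f * Δ|ℱ n] =ᵐ[P] f * P[Δ|ℱ n] :=
        condExp_mul_of_stronglyMeasurable_left hf_sm hfΔ_int hΔ_int
      calc ∫ ω, f ω * Δ ω ∂P = ∫ ω, (P[f * Δ|ℱ n]) ω ∂P :=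
            (integral_condExp (ℱ.le n)).symm
        _ = ∫ ω, f ω * (P[Δ|ℱ n]) ω ∂P := integral_congr_ae hpull
        _ = ∫ ω, (0:ℝ) ∂P := by
            refine integral_congr_ae ?_
            filter_upwards [hΔ0] with ω hω
            simp [hω]
        _ = 0 := integral_zero _ _
    -- main estimate
    have hpt : ∀ ω, Real.exp (lam * γ (n+1) ω)
        ≤ f ω * (Real.cosh lam + Δ ω * Real.sinh lam) := by
      intro ω
      have h1 : lam * γ (n+1) ω = lam * γ n ω + lam * Δ ω := by rw [hΔ]; ring
      rw [h1, Real.exp_add]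
      exact mul_le_mul_of_nonneg_left (exp_mul_le_aux lam (Δ ω) (hinc n ω))
        (Real.exp_nonneg _)
    have hrhs_int : Integrable (fun ω => f ω * (Real.cosh lam + Δ ω * Real.sinh lam)) P := by
      have : (fun ω => f ω * (Real.cosh lam + Δ ω * Real.sinh lam))
          = fun ω => Real.cosh lam * f ω + Real.sinh lam * (f ω * Δ ω) := by
        funext ω; ring
      rw [this]
      have hi1 : Integrable (fun ω => Real.cosh lam * f ω) P := hf_int.const_mul _
      have hi2 : Integrable (fun ω => Real.sinh lam * (f ω * Δ ω)) P :=
        hfΔ_int.const_mul _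
      exact hi1.add hi2
    calc ∫ ω, Real.exp (lam * γ (n+1) ω) ∂P
        ≤ ∫ ω, f ω * (Real.cosh lam + Δ ω * Real.sinh lam) ∂P :=
          integral_mono (hexp_int lam (n+1)) hrhs_int hpt
      _ = Real.cosh lam * ∫ ω, f ω ∂P + Real.sinh lam * ∫ ω, f ω * Δ ω ∂P := by
          have : (fun ω => f ω * (Real.cosh lam + Δ ω * Real.sinh lam))
              = fun ω => Real.cosh lam * f ω + Real.sinh lam * (f ω * Δ ω) := by
            funext ω; ring
          have hi1 : Integrable (fun ω => Real.cosh lam * f ω) P := hf_int.const_mul _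
          have hi2 : Integrable (fun ω => Real.sinh lam * (f ω * Δ ω)) P :=
            hfΔ_int.const_mul _
          rw [this, integral_add hi1 hi2, integral_const_mul, integral_const_mul]
      _ = Real.cosh lam * ∫ ω, f ω ∂P := by rw [hfΔ0, mul_zero, add_zero]
      _ ≤ Real.exp (lam ^ 2 / 2) * Real.exp (n * lam ^ 2 / 2) := by
          have h1 : (0:ℝ) ≤ ∫ ω, f ω ∂P :=
            integral_nonneg fun ω => Real.exp_nonneg _
          have h2 := Real.cosh_le_exp_half_sq lam
          have h3 : Real.cosh lam * ∫ ω, f ω ∂P ≤ Real.exp (lam ^ 2 / 2) * ∫ ω, f ω ∂P :=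
            mul_le_mul_of_nonneg_right h2 h1
          exact h3.trans (mul_le_mul_of_nonneg_left ih (Real.exp_nonneg _))
      _ = Real.exp ((n + 1 : ℕ) * lam ^ 2 / 2) := by
          rw [← Real.exp_add]; push_cast; ring_nf

/-- The exploration-martingale estimate (Lemma 4.8 of Kozma–Nachmias, abstract
form): there are absolute constants `C, c > 0` such that for any probability
space, any martingale `γ` (with `γ_0 = 0` and increments bounded by `1`) adapted
to a filtration with stopping time `τ`, any `μ = c₁ e^{−C₁ log² s} < 1/4`, and
any random variable `X` satisfying deterministically
`X ≥ γ_i + √μ · min(i, τ)` for all `i`, one has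
`P(μτ ≥ X ≥ N) ≤ (C/μ) e^{−cN}`. -/
theorem stmt9 :
    ∃ C > (0 : ℝ), ∃ c > (0 : ℝ),
      ∀ (Ω : Type) (m0 : MeasurableSpace Ω) (P : Measure Ω),
        IsProbabilityMeasure P →
        ∀ (ℱ : Filtration ℕ m0) (γ : ℕ → Ω → ℝ),
          Martingale γ ℱ P → (∀ ω, γ 0 ω = 0) →
          (∀ (i : ℕ) ω, |γ (i + 1) ω - γ i ω| ≤ 1) →
          ∀ τ : Ω → ℕ, IsStoppingTime ℱ (fun ω => (τ ω : WithTop ℕ)) →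
          ∀ c₁ C₁ s μc : ℝ, 0 < c₁ → 0 < C₁ → 2 ≤ s →
            μc = c₁ * Real.exp (-C₁ * (Real.log s) ^ 2) → μc < 1 / 4 →
          ∀ X : Ω → ℝ,
            (∀ (i : ℕ) ω, γ i ω + Real.sqrt μc * min (i : ℝ) (τ ω : ℝ) ≤ X ω) →
          ∀ N : ℝ, 0 < N →
            (P {ω | μc * (τ ω : ℝ) ≥ X ω ∧ X ω ≥ N}).toReal
              ≤ (C / μc) * Real.exp (-c * N) := by
  refine ⟨32, by norm_num, 1/16, by norm_num, ?_⟩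
  intro Ω m0 P hP ℱ γ hmart hγ0 hinc τ hτ c₁ C₁ s μc hc₁ hC₁ hs hμc hμlt X hX N hN
  haveI := hP
  have hμpos : 0 < μc := hμc ▸ mul_pos hc₁ (Real.exp_pos _)
  set sq := Real.sqrt μc with hsq
  have hsqpos : 0 < sq := Real.sqrt_pos.2 hμpos
  have hsqlt : sq < 1/2 := by
    have h := Real.sqrt_lt_sqrt hμpos.le hμlt
    rwa [show (1/4:ℝ) = (1/2)^2 by norm_num, Real.sqrt_sq (by norm_num : (0:ℝ) ≤ 1/2)] at h
  have hsq_sq : sq ^ 2 = μc := Real.sq_sqrt hμpos.le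
  have hμ_le : μc ≤ sq / 2 := by nlinarith
  -- the bad events
  set A : ℕ → Set Ω := fun i =>
    {ω | τ ω = i ∧ N ≤ μc * i ∧ γ i ω ≤ -(sq/2) * i} with hA_def
  have hsub : {ω | μc * (τ ω : ℝ) ≥ X ω ∧ X ω ≥ N} ⊆ ⋃ i, A i := by
    rintro ω ⟨h1, h2⟩
    refine Set.mem_iUnion.2 ⟨τ ω, rfl, ?_, ?_⟩
    · exact h2.trans h1
    · have h3 := hX (τ ω) ω
      rw [min_self] at h3
      have h4 : (0:ℝ) ≤ (τ ω : ℝ) := Nat.cast_nonneg _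
      nlinarith
  -- per-index tail bound, via the martingale mgf estimate
  set g : ℕ → ℝ := fun i => if N ≤ μc * i then Real.exp (-(μc * i)/8) else 0 with hg_def
  have hg_nonneg : ∀ i, 0 ≤ g i := by
    intro i; rw [hg_def]; dsimp only
    split <;> positivity
  have hA_bd : ∀ i, P (A i) ≤ ENNReal.ofReal (g i) := by
    intro i
    rw [hg_def]; dsimp only
    split
    case isTrue hNi =>
      set lam : ℝ := sq / 2 with hlam
      have hεpos : (0:ℝ) < Real.exp (μc * i / 4) := Real.exp_pos _
      have hint : Integrable (fun ω => Real.exp (-lam * γ i ω)) P := by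
        have hbd : ∀ (j : ℕ) ω, |γ j ω| ≤ j := by
          intro j
          induction j with
          | zero => intro ω; simp [hγ0 ω]
          | succ n ih =>
            intro ω
            have h5 : |γ (n+1) ω| ≤ |γ (n+1) ω - γ n ω| + |γ n ω| := by
              simpa using abs_add_le (γ (n+1) ω - γ n ω) (γ n ω)
            push_cast
            linarith [hinc n ω, ih ω]
        refine integrable_of_bdd
          ((Real.continuous_exp.comp_stronglyMeasurable
            (((hmart.stronglyAdapted i).mono (ℱ.le i)).const_mul _)).aestronglyMeasurable)
          (Real.exp (|(-lam)| * i)) fun ω => ?_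
        rw [abs_of_pos (Real.exp_pos _)]
        apply Real.exp_le_exp.2
        calc -lam * γ i ω ≤ |(-lam) * γ i ω| := le_abs_self _
          _ = |(-lam)| * |γ i ω| := abs_mul _ _
          _ ≤ |(-lam)| * i := mul_le_mul_of_nonneg_left (hbd i ω) (abs_nonneg _)
      have hmark := mul_meas_ge_le_integral_of_nonneg
        (Filter.Eventually.of_forall fun ω => Real.exp_nonneg (-lam * γ i ω))
        hint (Real.exp (μc * i / 4))
      have hmgf := mgf_bound hmart hγ0 hinc (-lam) i
      have hlamsq : (i : ℝ) * (-lam) ^ 2 / 2 = μc * i / 8 := by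
        rw [hlam]; ring_nf; nlinarith [hsq_sq]
      rw [hlamsq] at hmgf
      have hsub2 : A i ⊆ {x | Real.exp (μc * i / 4) ≤ Real.exp (-lam * γ i x)} := by
        rintro ω ⟨-, -, h3⟩
        refine Real.exp_le_exp.2 ?_
        have h4 : (0:ℝ) ≤ (i : ℝ) := Nat.cast_nonneg _
        rw [hlam]
        nlinarith [hsq_sq]
      have htr : (P (A i)).toReal ≤ Real.exp (-(μc * i)/8) := by
        have h5 : (P (A i)).toReal
            ≤ (P {x | Real.exp (μc * i / 4) ≤ Real.exp (-lam * γ i x)}).toReal :=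
          ENNReal.toReal_mono (measure_ne_top P _) (measure_mono hsub2)
        have h6 : (P {x | Real.exp (μc * i / 4) ≤ Real.exp (-lam * γ i x)}).toReal
            ≤ Real.exp (μc * i / 8) / Real.exp (μc * i / 4) := by
          rw [le_div_iff₀ hεpos, mul_comm]
          exact hmark.trans hmgf
        rw [← Real.exp_sub] at h6
        calc (P (A i)).toReal ≤ Real.exp (μc * i / 8 - μc * i / 4) := h5.trans h6
          _ = Real.exp (-(μc * i)/8) := by ring_nf
      exact (ENNReal.le_ofReal_iff_toReal_le (measure_ne_top P _)
        (Real.exp_nonneg _)).2 htr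
    case isFalse hNi =>
      have h0 : P (A i) ≤ P (∅ : Set Ω) :=
        measure_mono fun ω hω => absurd hω.2.1 hNi
      simpa using h0
  -- geometric summation
  set r : ℝ := Real.exp (-(μc/16)) with hr
  have hr0 : 0 ≤ r := Real.exp_nonneg _
  have hr1 : r < 1 := by
    rw [hr]; exact Real.exp_lt_one_iff.2 (by linarith)
  have hg_le : ∀ i, g i ≤ Real.exp (-N/16) * r ^ i := by
    intro i
    rw [hg_def]; dsimp only
    split
    case isTrue hNi =>
      rw [hr, show Real.exp (-(μc/16)) ^ i = Real.exp ((i:ℝ) * -(μc/16)) from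
        (Real.exp_nat_mul _ i).symm, ← Real.exp_add]
      exact Real.exp_le_exp.2 (by linarith)
    case isFalse hNi => positivity
  have hsumr : Summable (fun i : ℕ => Real.exp (-N/16) * r ^ i) :=
    (summable_geometric_of_lt_one hr0 hr1).mul_left _
  have hg_sum : Summable g := Summable.of_nonneg_of_le hg_nonneg hg_le hsumr
  have htsum : ∑' i, g i ≤ Real.exp (-N/16) * (1 - r)⁻¹ := by
    calc ∑' i, g i ≤ ∑' i : ℕ, Real.exp (-N/16) * r ^ i :=
          hg_sum.tsum_le_tsum hg_le hsumr
      _ = Real.exp (-N/16) * ∑' i : ℕ, r ^ i := tsum_mul_left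
      _ = Real.exp (-N/16) * (1 - r)⁻¹ := by rw [tsum_geometric_of_lt_one hr0 hr1]
  -- 1/(1-r) ≤ 32/μc
  have hinv : (1 - r)⁻¹ ≤ 32 / μc := by
    set x : ℝ := μc / 16 with hx
    have hxpos : 0 < x := by positivity
    have hx1 : x ≤ 1/2 := by rw [hx]; linarith
    have h1 : r * (1 + x) ≤ 1 := by
      have := Real.add_one_le_exp x
      have h2 : r * (1 + x) ≤ r * Real.exp x :=
        mul_le_mul_of_nonneg_left (by linarith) hr0
      have h3 : r * Real.exp x = 1 := by
        rw [hr, hx, ← Real.exp_add]; ring_nf; exact Real.exp_zero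
      linarith
    have h2 : 1 - x ≤ r := by
      have := Real.add_one_le_exp (-x)
      rw [hr, hx]; rw [hx] at this; linarith
    have h3 : x / 2 ≤ 1 - r := by nlinarith
    have h4 : (1 - r)⁻¹ ≤ (x / 2)⁻¹ := by
      apply inv_anti₀ (by positivity) h3
    have h5 : (x / 2)⁻¹ = 32 / μc := by
      rw [hx, div_div, inv_div]; norm_num
    linarith
  have htsum2 : ∑' i, g i ≤ 32 / μc * Real.exp (-(1/16) * N) := by
    have h6 : Real.exp (-N/16) * (1 - r)⁻¹ ≤ Real.exp (-N/16) * (32 / μc) :=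
      mul_le_mul_of_nonneg_left hinv (Real.exp_nonneg _)
    calc ∑' i, g i ≤ Real.exp (-N/16) * (32 / μc) := htsum.trans h6
      _ = 32 / μc * Real.exp (-(1/16) * N) := by rw [mul_comm]; ring_nf
  -- assemble
  have hfinal : P {ω | μc * (τ ω : ℝ) ≥ X ω ∧ X ω ≥ N}
      ≤ ENNReal.ofReal (32 / μc * Real.exp (-(1/16) * N)) := by
    calc P {ω | μc * (τ ω : ℝ) ≥ X ω ∧ X ω ≥ N} ≤ P (⋃ i, A i) := measure_mono hsub
      _ ≤ ∑' i, P (A i) := measure_iUnion_le _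
      _ ≤ ∑' i, ENNReal.ofReal (g i) := ENNReal.tsum_le_tsum hA_bd
      _ = ENNReal.ofReal (∑' i, g i) :=
          (ENNReal.ofReal_tsum_of_nonneg hg_nonneg hg_sum).symm
      _ ≤ ENNReal.ofReal (32 / μc * Real.exp (-(1/16) * N)) :=
          ENNReal.ofReal_le_ofReal htsum2
  calc (P {ω | μc * (τ ω : ℝ) ≥ X ω ∧ X ω ≥ N}).toReal
      ≤ (ENNReal.ofReal (32 / μc * Real.exp (-(1/16) * N))).toReal :=
        ENNReal.toReal_mono ENNReal.ofReal_ne_top hfinal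
    _ = 32 / μc * Real.exp (-(1/16) * N) := ENNReal.toReal_ofReal (by positivity)
end

section
/- Deterministic trichotomy for the second moment: if pairs (x₁,y₁) and (x₂,y₂) are both admissible (meaning 0 ↔ x_i inside Q_j, x_i ↔ y_i, and the boundary edge (x_i, x̃_i) is pivotal for 0 ↔ y_i), then either (i) x₁ = x₂ and y₁ = y₂; or (ii) x₁ = x₂, y₁ ≠ y₂, and there exists z such that {0 ↔ x₁ inside Q_j} ∘ {x₁ ↔ z} ∘ {z ↔ y₁} ∘ {z ↔ y₂} occurs; or (iii) x₁ ≠ x₂ and {0 ↔ x₁ inside Q_j, 0 ↔ x₂ inside Q_j} ∘ {x₁ ↔ y₁} ∘ {x₂ ↔ y₂} occurs. -/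
open MeasureTheory ProbabilityTheory
/-- Disjoint occurrence of finitely many events on a configuration space:
there exist pairwise disjoint edge sets certifying each event. -/
def MultiDisjOcc {ι : Type*} {n : ℕ} (A : Fin n → Set (ι → Bool)) :
    Set (ι → Bool) :=
  {ω | ∃ U : Fin n → Set ι, (∀ j k, j ≠ k → Disjoint (U j) (U k)) ∧
    ∀ j, ∀ ω', (∀ e ∈ U j, ω' e = ω e) → ω' ∈ A j}

/-- The configuration `ω` with the edge `e` closed. -/
def closeEdge (d : ℕ) (e : Sym2 (Vd d)) (ω : Config d) : Config d :=
  fun e' => if e' = e then false else ω e'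

/-- The edge `e` is pivotal for the event `0 ↔ y` in the configuration `ω`. -/
def PivotalFor (d : ℕ) (E : Set (Sym2 (Vd d))) (e : Sym2 (Vd d))
    (ω : Config d) (y : Vd d) : Prop :=
  ConnIn d E ω Set.univ 0 y ∧ ¬ ConnIn d E (closeEdge d e ω) Set.univ 0 y

/-- The pair `(x, y)` (with chosen outside neighbour `xt` of `x`) is admissible:
`x ∈ ∂Q_j`, `0 ↔ x` inside `Q_j`, `x ↔ y`, and the boundary edge `(x, xt)` is
pivotal for `0 ↔ y`. -/
def Admissible (d : ℕ) (E : Set (Sym2 (Vd d))) (ω : Config d) (j : ℕ)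
    (x y xt : Vd d) : Prop :=
  x ∈ inBdry d E j ∧ xt ∉ cube d j ∧ s(x, xt) ∈ E ∧
  ConnIn d E ω (cube d j) 0 x ∧ ConnIn d E ω Set.univ x y ∧
  PivotalFor d E s(x, xt) ω y

section Aux

variable {d : ℕ} {E : Set (Sym2 (Vd d))}

lemma connIn_refl {ω : Config d} {S : Set (Vd d)} {a : Vd d} (ha : a ∈ S) :
    ConnIn d E ω S a a :=
  ⟨0, fun _ => a, rfl, rfl, fun _ _ => ha, fun i h => absurd h (Nat.not_lt_zero i)⟩

lemma connIn_cons {ω : Config d} {S : Set (Vd d)} {a c b : Vd d}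
    (he : s(a, c) ∈ E) (ho : ω s(a, c) = true) (ha : a ∈ S)
    (h : ConnIn d E ω S c b) : ConnIn d E ω S a b := by
  obtain ⟨n, γ, h0, hn, hS, hE⟩ := h
  refine ⟨n + 1, fun i => Nat.casesOn i a γ, rfl, hn, ?_, ?_⟩
  · intro i hi
    cases i with
    | zero => exact ha
    | succ k => exact hS k (by omega)
  · intro i hi
    cases i with
    | zero => simpa [h0] using ⟨he, ho⟩
    | succ k => exact hE k (by omega)

lemma connIn_trans {ω : Config d} {S : Set (Vd d)} {a b c : Vd d}
    (h1 : ConnIn d E ω S a b) (h2 : ConnIn d E ω S b c) : ConnIn d E ω S a c := by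
  obtain ⟨n, γ, h0, hn, hS, hE⟩ := h1
  subst h0
  induction n generalizing γ with
  | zero => rw [hn]; exact h2
  | succ m ih =>
    have hrest : ConnIn d E ω S (γ 1) c :=
      ih (fun i => γ (i + 1)) hn (fun i hi => hS (i + 1) (by omega))
        (fun i hi => hE (i + 1) (by omega))
    exact connIn_cons (hE 0 (Nat.succ_pos m)).1 (hE 0 (Nat.succ_pos m)).2
      (hS 0 (by omega)) hrest

lemma connIn_symm {ω : Config d} {S : Set (Vd d)} {a b : Vd d}
    (h : ConnIn d E ω S a b) : ConnIn d E ω S b a := by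
  obtain ⟨n, γ, h0, hn, hS, hE⟩ := h
  subst h0
  induction n generalizing γ with
  | zero => rw [← hn]; exact connIn_refl (hn ▸ hS 0 (le_refl 0))
  | succ m ih =>
    have hrest : ConnIn d E ω S b (γ 1) :=
      ih (fun i => γ (i + 1)) hn (fun i hi => hS (i + 1) (by omega))
        (fun i hi => hE (i + 1) (by omega))
    refine connIn_trans hrest ?_
    have hcomm : s(γ 1, γ 0) = s(γ 0, γ 1) := Sym2.eq_swap
    exact connIn_cons (hcomm ▸ (hE 0 (Nat.succ_pos m)).1)
      (hcomm ▸ (hE 0 (Nat.succ_pos m)).2) (hS 1 (by omega))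
      (connIn_refl (hS 0 (by omega)))

lemma connIn_mono {ω ω' : Config d} {S : Set (Vd d)} {a b : Vd d}
    (hle : ∀ e, ω e = true → ω' e = true) (h : ConnIn d E ω S a b) :
    ConnIn d E ω' S a b := by
  obtain ⟨n, γ, h0, hn, hS, hE⟩ := h
  exact ⟨n, γ, h0, hn, hS, fun i hi => ⟨(hE i hi).1, hle _ (hE i hi).2⟩⟩

lemma connIn_univ {ω : Config d} {S : Set (Vd d)} {a b : Vd d}
    (h : ConnIn d E ω S a b) : ConnIn d E ω Set.univ a b := by
  obtain ⟨n, γ, h0, hn, hS, hE⟩ := h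
  exact ⟨n, γ, h0, hn, fun _ _ => trivial, hE⟩

lemma connIn_endMem {ω : Config d} {S : Set (Vd d)} {a b : Vd d}
    (h : ConnIn d E ω S a b) : b ∈ S := by
  obtain ⟨n, γ, h0, hn, hS, hE⟩ := h
  exact hn ▸ hS n (le_refl n)

/-- Path surgery: either the connection survives in `ω'`, or some edge open in
`ω` but not in `ω'` has an endpoint `v` still connected to `b` in `ω'`. -/
lemma connIn_surgery {ω ω' : Config d} {S : Set (Vd d)} {a b : Vd d}
    (h : ConnIn d E ω S a b) :
    ConnIn d E ω' S a b ∨ ∃ u v : Vd d, s(u, v) ∈ E ∧ ω s(u, v) = true ∧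
      ¬ ω' s(u, v) = true ∧ ConnIn d E ω' S v b := by
  obtain ⟨n, γ, h0, hn, hS, hE⟩ := h
  subst h0
  induction n generalizing γ with
  | zero => exact Or.inl (by rw [← hn]; exact connIn_refl (hS 0 (le_refl 0)))
  | succ m ih =>
    rcases ih (fun i => γ (i + 1)) hn (fun i hi => hS (i + 1) (by omega))
        (fun i hi => hE (i + 1) (by omega)) with hc | hw
    · by_cases hop : ω' s(γ 0, γ 1) = true
      · exact Or.inl (connIn_cons (hE 0 (Nat.succ_pos m)).1 hop (hS 0 (by omega)) hc)
      · exact Or.inr ⟨γ 0, γ 1, (hE 0 (Nat.succ_pos m)).1,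
          (hE 0 (Nat.succ_pos m)).2, hop, hc⟩
    · exact Or.inr hw

/-- Certification: if `ω'` opens every `ω₀`-open edge between vertices of the
`ω₀`-cluster of `a` (within `S`), then connections from `a` survive in `ω'`. -/
lemma connIn_cert {ω₀ ω' : Config d} {S : Set (Vd d)} {a b : Vd d}
    (h : ConnIn d E ω₀ S a b)
    (hagree : ∀ u v : Vd d, ConnIn d E ω₀ S a u → ConnIn d E ω₀ S a v →
      ω₀ s(u, v) = true → ω' s(u, v) = true) : ConnIn d E ω' S a b := by
  obtain ⟨n, γ, h0, hn, hS, hE⟩ := h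
  have hpref : ∀ i, i ≤ n → ConnIn d E ω₀ S a (γ i) := by
    intro i hi
    exact ⟨i, γ, h0, rfl, fun k hk => hS k (le_trans hk hi),
      fun k hk => hE k (by omega)⟩
  refine ⟨n, γ, h0, hn, hS, fun i hi => ⟨(hE i hi).1, ?_⟩⟩
  exact hagree _ _ (hpref i (by omega)) (hpref (i + 1) (by omega)) (hE i hi).2

/-- Extraction of a self-avoiding open path. -/
lemma connIn_simple {ω : Config d} {S : Set (Vd d)} {a b : Vd d}
    (h : ConnIn d E ω S a b) :
    ∃ n : ℕ, ∃ γ : ℕ → Vd d, γ 0 = a ∧ γ n = b ∧ (∀ i ≤ n, γ i ∈ S) ∧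
      (∀ i < n, s(γ i, γ (i + 1)) ∈ E ∧ ω s(γ i, γ (i + 1)) = true) ∧
      ∀ i j, i ≤ n → j ≤ n → γ i = γ j → i = j := by
  obtain ⟨n, γ, hγ⟩ := h
  induction n using Nat.strong_induction_on generalizing γ with
  | _ n ih =>
  obtain ⟨h0, hn, hS, hE⟩ := hγ
  by_cases hinj : ∀ i j, i ≤ n → j ≤ n → γ i = γ j → i = j
  · exact ⟨n, γ, h0, hn, hS, hE, hinj⟩
  · push_neg at hinj
    obtain ⟨i₀, j₀, hi₀, hj₀, heq₀, hne₀⟩ := hinj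
    obtain ⟨i, j, hi, hj, hij, heq⟩ : ∃ i j, i ≤ n ∧ j ≤ n ∧ i < j ∧ γ i = γ j := by
      rcases Nat.lt_or_ge i₀ j₀ with hlt | hge
      · exact ⟨i₀, j₀, hi₀, hj₀, hlt, heq₀⟩
      · exact ⟨j₀, i₀, hj₀, hi₀, by omega, heq₀.symm⟩
    refine ih (n - (j - i)) (by omega) (fun k => if k ≤ i then γ k else γ (k + (j - i)))
      ⟨?_, ?_, ?_, ?_⟩
    · show (if 0 ≤ i then γ 0 else _) = a
      rw [if_pos (Nat.zero_le i)]; exact h0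
    · by_cases hni : n - (j - i) ≤ i
      · show (if n - (j - i) ≤ i then γ (n - (j - i)) else _) = b
        rw [if_pos hni]
        have h1 : n = j := by omega
        have h2 : n - (j - i) = i := by omega
        rw [h2, heq, ← h1, hn]
      · show (if n - (j - i) ≤ i then _ else γ (n - (j - i) + (j - i))) = b
        rw [if_neg hni]
        have h2 : n - (j - i) + (j - i) = n := by omega
        rw [h2, hn]
    · intro k hk
      by_cases hki : k ≤ i
      · show (if k ≤ i then γ k else _) ∈ S
        rw [if_pos hki]; exact hS k (by omega)
      · show (if k ≤ i then _ else γ (k + (j - i))) ∈ S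
        rw [if_neg hki]; exact hS _ (by omega)
    · intro k hk
      by_cases hki : k + 1 ≤ i
      · show s((if k ≤ i then γ k else _), (if k + 1 ≤ i then γ (k + 1) else _)) ∈ E ∧
          ω s((if k ≤ i then γ k else _), (if k + 1 ≤ i then γ (k + 1) else _)) = true
        rw [if_pos hki, if_pos (by omega : k ≤ i)]
        exact hE k (by omega)
      · by_cases hki' : k ≤ i
        · have hk_eq : k = i := by omega
          show s((if k ≤ i then γ k else _),
              (if k + 1 ≤ i then _ else γ (k + 1 + (j - i)))) ∈ E ∧
            ω s((if k ≤ i then γ k else _),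
              (if k + 1 ≤ i then _ else γ (k + 1 + (j - i)))) = true
          rw [if_pos hki', if_neg hki]
          have h1 : γ k = γ (k + (j - i)) := by
            rw [hk_eq]
            have h3 : i + (j - i) = j := by omega
            rw [h3, heq]
          have h4 : k + 1 + (j - i) = k + (j - i) + 1 := by omega
          rw [h1, h4]
          exact hE (k + (j - i)) (by omega)
        · show s((if k ≤ i then _ else γ (k + (j - i))),
              (if k + 1 ≤ i then _ else γ (k + 1 + (j - i)))) ∈ E ∧
            ω s((if k ≤ i then _ else γ (k + (j - i))),
              (if k + 1 ≤ i then _ else γ (k + 1 + (j - i)))) = true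
          rw [if_neg hki', if_neg hki]
          have h4 : k + 1 + (j - i) = k + (j - i) + 1 := by omega
          rw [h4]
          exact hE (k + (j - i)) (by omega)

/-- A segment of a path whose edges are in `E` and open in `ω'` gives a connection. -/
lemma segment_conn {ω' : Config d} {γ : ℕ → Vd d} {k l : ℕ} (hkl : k ≤ l)
    (h : ∀ t, k ≤ t → t < l → s(γ t, γ (t + 1)) ∈ E ∧ ω' s(γ t, γ (t + 1)) = true) :
    ConnIn d E ω' Set.univ (γ k) (γ l) := by
  refine ⟨l - k, fun t => γ (k + t), by show γ (k + 0) = γ k; rw [Nat.add_zero],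
    by show γ (k + (l - k)) = γ l; rw [Nat.add_sub_cancel' hkl],
    fun _ _ => trivial, fun i hi => ?_⟩
  exact h (k + i) (by omega) (by omega)

end Aux

section Aux2

variable {d : ℕ} {E : Set (Sym2 (Vd d))}

lemma pivotal_open {ω : Config d} {e : Sym2 (Vd d)} {y : Vd d}
    (h : PivotalFor d E e ω y) : ω e = true := by
  by_contra hne
  have hclose : closeEdge d e ω = ω := by
    funext e'
    unfold closeEdge
    by_cases he' : e' = e
    · rw [if_pos he', he']
      revert hne; cases ω e <;> simp
    · rw [if_neg he']
  exact h.2 (by rw [hclose]; exact h.1)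

lemma close2_true_iff (e₁ e₂ e : Sym2 (Vd d)) (ω : Config d) :
    (closeEdge d e₂ (closeEdge d e₁ ω)) e = true ↔
      ¬e = e₁ ∧ ¬e = e₂ ∧ ω e = true := by
  unfold closeEdge
  by_cases h2 : e = e₂ <;> by_cases h1 : e = e₁ <;> simp [h1, h2]

lemma close2_comm (e₁ e₂ : Sym2 (Vd d)) (ω : Config d) :
    closeEdge d e₂ (closeEdge d e₁ ω) = closeEdge d e₁ (closeEdge d e₂ ω) := by
  funext e
  unfold closeEdge
  by_cases h1 : e = e₁ <;> by_cases h2 : e = e₂ <;> simp [h1, h2]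

lemma edge_ne_of_outside {u v x xt : Vd d} {j : ℕ} (hu : u ∈ cube d j)
    (hv : v ∈ cube d j) (hxt : xt ∉ cube d j) : ¬ s(u, v) = s(x, xt) := by
  intro h
  rcases Sym2.eq_iff.mp h with ⟨_, h2⟩ | ⟨h1, _⟩
  · exact hxt (h2 ▸ hv)
  · exact hxt (h1 ▸ hu)

lemma cube_conn_lift {ω : Config d} {j : ℕ} {a b x₁ xt₁ x₂ xt₂ : Vd d}
    (hxt₁ : xt₁ ∉ cube d j) (hxt₂ : xt₂ ∉ cube d j)
    (h : ConnIn d E ω (cube d j) a b) :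
    ConnIn d E (closeEdge d s(x₂, xt₂) (closeEdge d s(x₁, xt₁) ω)) (cube d j) a b := by
  obtain ⟨n, γ, h0, hn, hS, hE⟩ := h
  refine ⟨n, γ, h0, hn, hS, fun i hi => ⟨(hE i hi).1, ?_⟩⟩
  rw [close2_true_iff]
  exact ⟨edge_ne_of_outside (hS i (by omega)) (hS (i+1) (by omega)) hxt₁,
    edge_ne_of_outside (hS i (by omega)) (hS (i+1) (by omega)) hxt₂, (hE i hi).2⟩

/-- The key surgery consequence: `y` hangs off the pivotal edge, i.e. `xt ↔ y`
in the configuration where both boundary edges are closed. -/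
lemma outer_cluster {ω : Config d} {j : ℕ} {x y xt x' y' xt' : Vd d}
    (hxcube : x ∈ cube d j) (hxt : xt ∉ cube d j) (hE1 : s(x, xt) ∈ E)
    (hcube : ConnIn d E ω (cube d j) 0 x)
    (hpiv : PivotalFor d E s(x, xt) ω y)
    (hxcube' : x' ∈ cube d j) (hxt' : xt' ∉ cube d j) (hE2 : s(x', xt') ∈ E)
    (hcube' : ConnIn d E ω (cube d j) 0 x')
    (hpiv' : PivotalFor d E s(x', xt') ω y') :
    ConnIn d E (closeEdge d s(x', xt') (closeEdge d s(x, xt) ω)) Set.univ xt y := by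
  set ωc := closeEdge d s(x', xt') (closeEdge d s(x, xt) ω) with hωcdef
  have hmono1 : ∀ e, ωc e = true → (closeEdge d s(x, xt) ω) e = true := by
    intro e he
    rw [hωcdef, close2_true_iff] at he
    unfold closeEdge
    rw [if_neg he.1]
    exact he.2.2
  have hmono2 : ∀ e, ωc e = true → (closeEdge d s(x', xt') ω) e = true := by
    intro e he
    rw [hωcdef, close2_true_iff] at he
    unfold closeEdge
    rw [if_neg he.2.1]
    exact he.2.2
  have hnoc : ¬ ConnIn d E ωc Set.univ 0 y := fun h => hpiv.2 (connIn_mono hmono1 h)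
  have hc0x : ConnIn d E ωc Set.univ 0 x := connIn_univ (cube_conn_lift hxt hxt' hcube)
  have hc0x' : ConnIn d E ωc Set.univ 0 x' := connIn_univ (cube_conn_lift hxt hxt' hcube')
  rcases connIn_surgery (ω' := ωc) hpiv.1 with hc | ⟨u, v, huvE, huvω, huvc, hvy⟩
  · exact absurd hc hnoc
  · have hcases : s(u, v) = s(x, xt) ∨ (s(u, v) = s(x', xt') ∧ s(x', xt') ≠ s(x, xt)) := by
      by_cases hee : s(x', xt') = s(x, xt)
      · left
        by_contra hcon
        exact huvc ((close2_true_iff _ _ _ _).mpr ⟨hcon, by rw [hee]; exact hcon, huvω⟩)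
      · by_cases h1 : s(u, v) = s(x, xt)
        · exact Or.inl h1
        · refine Or.inr ⟨?_, hee⟩
          by_contra h2
          exact huvc ((close2_true_iff _ _ _ _).mpr ⟨h1, h2, huvω⟩)
    rcases hcases with h | ⟨h, hee⟩
    · rcases Sym2.eq_iff.mp h with ⟨hu, hv⟩ | ⟨hu, hv⟩
      · exact hv ▸ hvy
      · exact absurd (connIn_trans hc0x (hv ▸ hvy)) hnoc
    · rcases Sym2.eq_iff.mp h with ⟨hu, hv⟩ | ⟨hu, hv⟩
      · -- v = xt' : contradiction with pivotality of s(x,xt) for y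
        exfalso
        have hedge : (closeEdge d s(x, xt) ω) s(x', xt') = true := by
          unfold closeEdge
          rw [if_neg hee]
          exact pivotal_open hpiv'
        have hxy : ConnIn d E (closeEdge d s(x, xt) ω) Set.univ 0 y :=
          connIn_trans (connIn_mono hmono1 hc0x')
            (connIn_cons hE2 hedge trivial (connIn_mono hmono1 (hv ▸ hvy)))
        exact hpiv.2 hxy
      · exact absurd (connIn_trans hc0x' (hv ▸ hvy)) hnoc

lemma multiDisjOcc_three {ι : Type*} (A0 A1 A2 : Set (ι → Bool)) (ω : ι → Bool)
    (U0 U1 U2 : Set ι) (h01 : Disjoint U0 U1) (h02 : Disjoint U0 U2)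
    (h12 : Disjoint U1 U2)
    (c0 : ∀ ω', (∀ e ∈ U0, ω' e = ω e) → ω' ∈ A0)
    (c1 : ∀ ω', (∀ e ∈ U1, ω' e = ω e) → ω' ∈ A1)
    (c2 : ∀ ω', (∀ e ∈ U2, ω' e = ω e) → ω' ∈ A2) :
    ω ∈ MultiDisjOcc ![A0, A1, A2] := by
  refine ⟨![U0, U1, U2], ?_, ?_⟩
  · intro jj kk hjk
    fin_cases jj <;> fin_cases kk <;>
      first
        | exact absurd rfl hjk
        | exact h01 | exact h02 | exact h12
        | exact h01.symm | exact h02.symm | exact h12.symm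
  · intro jj
    fin_cases jj
    · exact c0
    · exact c1
    · exact c2

lemma multiDisjOcc_four {ι : Type*} (A0 A1 A2 A3 : Set (ι → Bool)) (ω : ι → Bool)
    (U0 U1 U2 U3 : Set ι) (h01 : Disjoint U0 U1) (h02 : Disjoint U0 U2)
    (h03 : Disjoint U0 U3) (h12 : Disjoint U1 U2) (h13 : Disjoint U1 U3)
    (h23 : Disjoint U2 U3)
    (c0 : ∀ ω', (∀ e ∈ U0, ω' e = ω e) → ω' ∈ A0)
    (c1 : ∀ ω', (∀ e ∈ U1, ω' e = ω e) → ω' ∈ A1)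
    (c2 : ∀ ω', (∀ e ∈ U2, ω' e = ω e) → ω' ∈ A2)
    (c3 : ∀ ω', (∀ e ∈ U3, ω' e = ω e) → ω' ∈ A3) :
    ω ∈ MultiDisjOcc ![A0, A1, A2, A3] := by
  refine ⟨![U0, U1, U2, U3], ?_, ?_⟩
  · intro jj kk hjk
    fin_cases jj <;> fin_cases kk <;>
      first
        | exact absurd rfl hjk
        | exact h01 | exact h02 | exact h03 | exact h12 | exact h13 | exact h23
        | exact h01.symm | exact h02.symm | exact h03.symm | exact h12.symm
        | exact h13.symm | exact h23.symm
  · intro jj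
    fin_cases jj
    · exact c0
    · exact c1
    · exact c2
    · exact c3

end Aux2

/-- Deterministic trichotomy for the second-moment estimate: if `(x₁,y₁)` and
`(x₂,y₂)` are both admissible, then either they coincide; or `x₁ = x₂`,
`y₁ ≠ y₂` and for some `z` the events `{0 ↔ x₁ in Q_j}`, `{x₁ ↔ z}`, `{z ↔ y₁}`,
`{z ↔ y₂}` occur disjointly; or `x₁ ≠ x₂` and
`{0 ↔ x₁ in Q_j, 0 ↔ x₂ in Q_j}`, `{x₁ ↔ y₁}`, `{x₂ ↔ y₂}` occur disjointly. -/
theorem stmt18 (d : ℕ) (E : Set (Sym2 (Vd d))) (ω : Config d) (j : ℕ)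
    (x₁ y₁ xt₁ x₂ y₂ xt₂ : Vd d)
    (h1 : Admissible d E ω j x₁ y₁ xt₁)
    (h2 : Admissible d E ω j x₂ y₂ xt₂) :
    (x₁ = x₂ ∧ y₁ = y₂) ∨
    (x₁ = x₂ ∧ y₁ ≠ y₂ ∧ ∃ z : Vd d,
      ω ∈ MultiDisjOcc
        ![{ω' : Config d | ConnIn d E ω' (cube d j) 0 x₁},
          {ω' | ConnIn d E ω' Set.univ x₁ z},
          {ω' | ConnIn d E ω' Set.univ z y₁},
          {ω' | ConnIn d E ω' Set.univ z y₂}]) ∨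
    (x₁ ≠ x₂ ∧
      ω ∈ MultiDisjOcc
        ![{ω' : Config d | ConnIn d E ω' (cube d j) 0 x₁ ∧
            ConnIn d E ω' (cube d j) 0 x₂},
          {ω' | ConnIn d E ω' Set.univ x₁ y₁},
          {ω' | ConnIn d E ω' Set.univ x₂ y₂}]) := by
  classical
  obtain ⟨hbd₁, hxt₁, he₁E, hcube₁, hxy₁, hpiv₁⟩ := h1
  obtain ⟨hbd₂, hxt₂, he₂E, hcube₂, hxy₂, hpiv₂⟩ := h2
  have hx₁cube : x₁ ∈ cube d j := hbd₁.1
  have hx₂cube : x₂ ∈ cube d j := hbd₂.1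
  set ωc := closeEdge d s(x₂, xt₂) (closeEdge d s(x₁, xt₁) ω) with hωcdef
  have hope₁ : ω s(x₁, xt₁) = true := pivotal_open hpiv₁
  have hope₂ : ω s(x₂, xt₂) = true := pivotal_open hpiv₂
  have hmono : ∀ e, ωc e = true → ω e = true :=
    fun e he => ((close2_true_iff _ _ _ _).mp he).2.2
  have hmono1 : ∀ e, ωc e = true → (closeEdge d s(x₁, xt₁) ω) e = true := by
    intro e he
    rw [close2_true_iff] at he
    unfold closeEdge
    rw [if_neg he.1]
    exact he.2.2
  have hmono2 : ∀ e, ωc e = true → (closeEdge d s(x₂, xt₂) ω) e = true := by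
    intro e he
    rw [close2_true_iff] at he
    unfold closeEdge
    rw [if_neg he.2.1]
    exact he.2.2
  have hyA₁ : ConnIn d E ωc Set.univ xt₁ y₁ :=
    outer_cluster hx₁cube hxt₁ he₁E hcube₁ hpiv₁ hx₂cube hxt₂ he₂E hcube₂ hpiv₂
  have hyA₂ : ConnIn d E ωc Set.univ xt₂ y₂ := by
    rw [hωcdef, close2_comm]
    exact outer_cluster hx₂cube hxt₂ he₂E hcube₂ hpiv₂ hx₁cube hxt₁ he₁E hcube₁ hpiv₁
  have hnoc₁ : ¬ ConnIn d E ωc Set.univ 0 y₁ :=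
    fun h => hpiv₁.2 (connIn_mono hmono1 h)
  have hnoc₂ : ¬ ConnIn d E ωc Set.univ 0 y₂ :=
    fun h => hpiv₂.2 (connIn_mono hmono2 h)
  have hZ : ∀ v, ConnIn d E ω (cube d j) 0 v → ConnIn d E ωc Set.univ 0 v :=
    fun v hv => connIn_univ (cube_conn_lift hxt₁ hxt₂ hv)
  have hZA₁ : ∀ v, ConnIn d E ωc Set.univ 0 v →
      ConnIn d E ωc Set.univ xt₁ v → False :=
    fun v h0v hxv => hnoc₁ (connIn_trans (connIn_trans h0v (connIn_symm hxv)) hyA₁)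
  have hZA₂ : ∀ v, ConnIn d E ωc Set.univ 0 v →
      ConnIn d E ωc Set.univ xt₂ v → False :=
    fun v h0v hxv => hnoc₂ (connIn_trans (connIn_trans h0v (connIn_symm hxv)) hyA₂)
  -- certification of in-cube connections through the in-cube cluster edge set
  have hU0cert : ∀ b, ConnIn d E ω (cube d j) 0 b → ∀ ω' : Config d,
      (∀ e ∈ {e : Sym2 (Vd d) | ∀ v ∈ e, ConnIn d E ω (cube d j) 0 v}, ω' e = ω e) →
      ConnIn d E ω' (cube d j) 0 b := by
    intro b hb ω' hag
    refine connIn_cert hb ?_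
    intro u v hu hv hop
    rw [hag s(u, v) (fun w hw => by
      rcases Sym2.mem_iff.mp hw with h | h <;> subst h <;> assumption)]
    exact hop
  -- certification of the hanging-cluster connections
  have hWcert : ∀ (x y xt : Vd d), s(x, xt) ∈ E → ω s(x, xt) = true →
      ConnIn d E ωc Set.univ xt y → ∀ ω' : Config d,
      (∀ e ∈ insert s(x, xt) {e : Sym2 (Vd d) | ∀ v ∈ e, ConnIn d E ωc Set.univ xt v},
        ω' e = ω e) → ConnIn d E ω' Set.univ x y := by
    intro x y xt heE hop hyA ω' hag
    have he : ω' s(x, xt) = true := by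
      rw [hag _ (Set.mem_insert _ _)]; exact hop
    refine connIn_cons heE he trivial ?_
    refine connIn_cert hyA ?_
    intro u v hu hv hopc
    have hmem : s(u, v) ∈ {e : Sym2 (Vd d) | ∀ w ∈ e, ConnIn d E ωc Set.univ xt w} :=
      fun w hw => by rcases Sym2.mem_iff.mp hw with h | h <;> subst h <;> assumption
    rw [hag _ (Set.mem_insert_of_mem _ hmem)]
    exact hmono _ hopc
  -- disjointness of the in-cube edge set from the hanging edge sets
  have hd0W : ∀ (x xt : Vd d), xt ∉ cube d j →
      (∀ v, ConnIn d E ωc Set.univ 0 v → ConnIn d E ωc Set.univ xt v → False) →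
      Disjoint {e : Sym2 (Vd d) | ∀ v ∈ e, ConnIn d E ω (cube d j) 0 v}
        (insert s(x, xt) {e : Sym2 (Vd d) | ∀ v ∈ e, ConnIn d E ωc Set.univ xt v}) := by
    intro x xt hxt hZA
    rw [Set.disjoint_left]
    intro e
    induction e using Sym2.ind with
    | _ u v =>
    intro he hmem
    rcases Set.mem_insert_iff.mp hmem with h | h
    · have hxtC : ConnIn d E ω (cube d j) 0 xt :=
        he xt (by rw [h]; exact Sym2.mem_iff.mpr (Or.inr rfl))
      exact hxt (connIn_endMem hxtC)
    · exact hZA u (hZ u (he u (Sym2.mem_iff.mpr (Or.inl rfl))))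
        (h u (Sym2.mem_iff.mpr (Or.inl rfl)))
  by_cases hxx : x₁ = x₂
  · by_cases hyy : y₁ = y₂
    · exact Or.inl ⟨hxx, hyy⟩
    refine Or.inr (Or.inl ⟨hxx, hyy, ?_⟩)
    by_cases hee : s(x₁, xt₁) = s(x₂, xt₂)
    · -- tripod construction
      have hxtt : xt₁ = xt₂ := by
        rcases Sym2.eq_iff.mp hee with ⟨h1, h2⟩ | ⟨h1, h2⟩
        · exact h2
        · exact absurd (h1 ▸ hx₁cube) hxt₂
      have hyA₂' : ConnIn d E ωc Set.univ xt₁ y₂ := by rw [hxtt]; exact hyA₂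
      obtain ⟨nP, P, hP0, hPn, -, hPE, hPinj⟩ := connIn_simple hyA₁
      obtain ⟨nQ, Q, hQ0, hQn, -, hQE⟩ := hyA₂'
      have hm0 : (fun k => ∃ i, i ≤ nP ∧ Q k = P i) 0 :=
        ⟨0, Nat.zero_le _, by rw [hQ0, hP0]⟩
      set m := Nat.findGreatest (fun k => ∃ i, i ≤ nP ∧ Q k = P i) nQ with hmdef
      have hmle : m ≤ nQ := Nat.findGreatest_le nQ
      obtain ⟨iz, hiz, hQm⟩ : ∃ i, i ≤ nP ∧ Q m = P i := by
        rw [hmdef]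
        exact Nat.findGreatest_spec (P := fun k => ∃ i, i ≤ nP ∧ Q k = P i)
          (Nat.zero_le nQ) hm0
      have hmax : ∀ t, m < t → t ≤ nQ → ∀ i, i ≤ nP → Q t ≠ P i :=
        fun t ht htn i hi hcon =>
          Nat.findGreatest_is_greatest ht htn ⟨i, hi, hcon⟩
      -- vertices of P and Q lie in the hanging cluster
      have hPA : ∀ t, t ≤ nP → ConnIn d E ωc Set.univ xt₁ (P t) := by
        intro t ht
        have := segment_conn (γ := P) (Nat.zero_le t) (fun s hs hst => hPE s (by omega))
        rwa [hP0] at this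
      have hQA : ∀ t, t ≤ nQ → ConnIn d E ωc Set.univ xt₁ (Q t) := by
        intro t ht
        have := segment_conn (γ := Q) (Nat.zero_le t) (fun s hs hst => hQE s (by omega))
        rwa [hQ0] at this
      refine ⟨P iz, ?_⟩
      refine multiDisjOcc_four _ _ _ _ ω
        {e : Sym2 (Vd d) | ∀ v ∈ e, ConnIn d E ω (cube d j) 0 v}
        (insert s(x₁, xt₁) {e : Sym2 (Vd d) | ∃ t, t < iz ∧ e = s(P t, P (t + 1))})
        {e : Sym2 (Vd d) | ∃ t, iz ≤ t ∧ t < nP ∧ e = s(P t, P (t + 1))}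
        {e : Sym2 (Vd d) | ∃ t, m ≤ t ∧ t < nQ ∧ e = s(Q t, Q (t + 1))}
        ?_ ?_ ?_ ?_ ?_ ?_ ?_ ?_ ?_ ?_
      · -- U₀ vs UX
        rw [Set.disjoint_left]
        intro e
        induction e using Sym2.ind with
        | _ u v =>
        intro he hmem
        rcases Set.mem_insert_iff.mp hmem with h | ⟨t, ht, heq⟩
        · have hxtC : ConnIn d E ω (cube d j) 0 xt₁ :=
            he xt₁ (by rw [h]; exact Sym2.mem_iff.mpr (Or.inr rfl))
          exact hxt₁ (connIn_endMem hxtC)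
        · have hPtC : ConnIn d E ω (cube d j) 0 (P t) :=
            he (P t) (by rw [heq]; exact Sym2.mem_iff.mpr (Or.inl rfl))
          exact hZA₁ (P t) (hZ _ hPtC) (hPA t (by omega))
      · -- U₀ vs UB
        rw [Set.disjoint_left]
        intro e
        induction e using Sym2.ind with
        | _ u v =>
        intro he ⟨t, ht1, ht2, heq⟩
        have hPtC : ConnIn d E ω (cube d j) 0 (P t) :=
          he (P t) (by rw [heq]; exact Sym2.mem_iff.mpr (Or.inl rfl))
        exact hZA₁ (P t) (hZ _ hPtC) (hPA t (by omega))
      · -- U₀ vs UC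
        rw [Set.disjoint_left]
        intro e
        induction e using Sym2.ind with
        | _ u v =>
        intro he ⟨t, ht1, ht2, heq⟩
        have hQtC : ConnIn d E ω (cube d j) 0 (Q t) :=
          he (Q t) (by rw [heq]; exact Sym2.mem_iff.mpr (Or.inl rfl))
        exact hZA₁ (Q t) (hZ _ hQtC) (hQA t (by omega))
      · -- UX vs UB
        rw [Set.disjoint_left]
        intro e
        induction e using Sym2.ind with
        | _ u v =>
        intro he1 ⟨b, hb1, hb2, heqB⟩
        rcases Set.mem_insert_iff.mp he1 with h | ⟨a, ha, heqA⟩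
        · have := (close2_true_iff _ _ _ _).mp
            (show ωc s(P b, P (b + 1)) = true from (hPE b hb2).2)
          exact this.1 (by rw [← heqB]; exact h)
        · have heqPP : s(P a, P (a + 1)) = s(P b, P (b + 1)) := heqA.symm.trans heqB
          rcases Sym2.eq_iff.mp heqPP with ⟨q1, q2⟩ | ⟨q1, q2⟩
          · have := hPinj a b (by omega) (by omega) q1
            omega
          · have e1 := hPinj a (b + 1) (by omega) (by omega) q1
            have e2 := hPinj (a + 1) b (by omega) (by omega) q2
            omega
      · -- UX vs UC
        rw [Set.disjoint_left]
        intro e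
        induction e using Sym2.ind with
        | _ u v =>
        intro he1 ⟨c, hc1, hc2, heqC⟩
        rcases Set.mem_insert_iff.mp he1 with h | ⟨a, ha, heqA⟩
        · have := (close2_true_iff _ _ _ _).mp
            (show ωc s(Q c, Q (c + 1)) = true from (hQE c hc2).2)
          exact this.1 (by rw [← heqC]; exact h)
        · have heqQP : s(Q c, Q (c + 1)) = s(P a, P (a + 1)) := heqC.symm.trans heqA
          rcases Sym2.eq_iff.mp heqQP with ⟨q1, q2⟩ | ⟨q1, q2⟩
          · exact hmax (c + 1) (by omega) (by omega) (a + 1) (by omega) q2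
          · exact hmax (c + 1) (by omega) (by omega) a (by omega) q2
      · -- UB vs UC
        rw [Set.disjoint_left]
        intro e
        induction e using Sym2.ind with
        | _ u v =>
        intro ⟨b, hb1, hb2, heqB⟩ ⟨c, hc1, hc2, heqC⟩
        have heqQP : s(Q c, Q (c + 1)) = s(P b, P (b + 1)) := heqC.symm.trans heqB
        rcases Sym2.eq_iff.mp heqQP with ⟨q1, q2⟩ | ⟨q1, q2⟩
        · exact hmax (c + 1) (by omega) (by omega) (b + 1) (by omega) q2
        · exact hmax (c + 1) (by omega) (by omega) b (by omega) q2
      · exact fun ω' hag => hU0cert x₁ hcube₁ ω' hag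
      · -- cert x₁ ↔ z
        intro ω' hag
        have he : ω' s(x₁, xt₁) = true := by
          rw [hag _ (Set.mem_insert _ _)]; exact hope₁
        have hseg : ConnIn d E ω' Set.univ (P 0) (P iz) :=
          segment_conn (Nat.zero_le iz) (fun t ht1 ht2 =>
            ⟨(hPE t (by omega)).1, by
              rw [hag _ (Set.mem_insert_of_mem _ ⟨t, ht2, rfl⟩)]
              exact hmono _ (hPE t (by omega)).2⟩)
        rw [hP0] at hseg
        exact connIn_cons he₁E he trivial hseg
      · -- cert z ↔ y₁
        intro ω' hag
        have hseg : ConnIn d E ω' Set.univ (P iz) (P nP) :=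
          segment_conn hiz (fun t ht1 ht2 =>
            ⟨(hPE t ht2).1, by
              rw [hag _ ⟨t, ht1, ht2, rfl⟩]
              exact hmono _ (hPE t ht2).2⟩)
        rwa [hPn] at hseg
      · -- cert z ↔ y₂
        intro ω' hag
        have hseg : ConnIn d E ω' Set.univ (Q m) (Q nQ) :=
          segment_conn hmle (fun t ht1 ht2 =>
            ⟨(hQE t ht2).1, by
              rw [hag _ ⟨t, ht1, ht2, rfl⟩]
              exact hmono _ (hQE t ht2).2⟩)
        rw [hQn, hQm] at hseg
        exact hseg
    · -- x₁ = x₂ but different pivotal edges: z = x₁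
      have hAA : ∀ v, ConnIn d E ωc Set.univ xt₁ v →
          ConnIn d E ωc Set.univ xt₂ v → False := by
        intro v hv1 hv2
        have h12 : ConnIn d E ωc Set.univ xt₁ y₂ :=
          connIn_trans (connIn_trans hv1 (connIn_symm hv2)) hyA₂
        have hedge : (closeEdge d s(x₂, xt₂) ω) s(x₁, xt₁) = true := by
          unfold closeEdge
          rw [if_neg hee]
          exact hope₁
        exact hpiv₂.2 (connIn_trans (connIn_mono hmono2 (hZ x₁ hcube₁))
          (connIn_cons he₁E hedge trivial (connIn_mono hmono2 h12)))
      refine ⟨x₁, ?_⟩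
      refine multiDisjOcc_four _ _ _ _ ω
        {e : Sym2 (Vd d) | ∀ v ∈ e, ConnIn d E ω (cube d j) 0 v}
        ∅
        (insert s(x₁, xt₁) {e : Sym2 (Vd d) | ∀ v ∈ e, ConnIn d E ωc Set.univ xt₁ v})
        (insert s(x₂, xt₂) {e : Sym2 (Vd d) | ∀ v ∈ e, ConnIn d E ωc Set.univ xt₂ v})
        (by simp) (hd0W x₁ xt₁ hxt₁ hZA₁) (hd0W x₂ xt₂ hxt₂ hZA₂)
        (by simp) (by simp) ?_
        (fun ω' hag => hU0cert x₁ hcube₁ ω' hag)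
        (fun ω' _ => connIn_refl trivial)
        (hWcert x₁ y₁ xt₁ he₁E hope₁ hyA₁)
        ?_
      · -- W₁ vs W₂
        rw [Set.disjoint_left]
        intro e
        induction e using Sym2.ind with
        | _ u v =>
        intro he1 he2
        rcases Set.mem_insert_iff.mp he1 with h1 | h1 <;>
          rcases Set.mem_insert_iff.mp he2 with h2 | h2
        · exact hee (h1.symm.trans h2)
        · have : ConnIn d E ωc Set.univ xt₂ x₁ :=
            h2 x₁ (by rw [h1]; exact Sym2.mem_iff.mpr (Or.inl rfl))
          exact hZA₂ x₁ (hZ x₁ hcube₁) this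
        · have : ConnIn d E ωc Set.univ xt₁ x₂ :=
            h1 x₂ (by rw [h2]; exact Sym2.mem_iff.mpr (Or.inl rfl))
          exact hZA₁ x₂ (hZ x₂ hcube₂) this
        · exact hAA u (h1 u (Sym2.mem_iff.mpr (Or.inl rfl)))
            (h2 u (Sym2.mem_iff.mpr (Or.inl rfl)))
      · intro ω' hag
        show ConnIn d E ω' Set.univ x₁ y₂
        rw [hxx]
        exact hWcert x₂ y₂ xt₂ he₂E hope₂ hyA₂ ω' hag
  · -- x₁ ≠ x₂
    refine Or.inr (Or.inr ⟨hxx, ?_⟩)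
    have hee : ¬ s(x₁, xt₁) = s(x₂, xt₂) := by
      intro h
      rcases Sym2.eq_iff.mp h with ⟨h1, _⟩ | ⟨h1, _⟩
      · exact hxx h1
      · exact hxt₂ (h1 ▸ hx₁cube)
    have hAA : ∀ v, ConnIn d E ωc Set.univ xt₁ v →
        ConnIn d E ωc Set.univ xt₂ v → False := by
      intro v hv1 hv2
      have h12 : ConnIn d E ωc Set.univ xt₁ y₂ :=
        connIn_trans (connIn_trans hv1 (connIn_symm hv2)) hyA₂
      have hedge : (closeEdge d s(x₂, xt₂) ω) s(x₁, xt₁) = true := by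
        unfold closeEdge
        rw [if_neg hee]
        exact hope₁
      exact hpiv₂.2 (connIn_trans (connIn_mono hmono2 (hZ x₁ hcube₁))
        (connIn_cons he₁E hedge trivial (connIn_mono hmono2 h12)))
    refine multiDisjOcc_three _ _ _ ω
      {e : Sym2 (Vd d) | ∀ v ∈ e, ConnIn d E ω (cube d j) 0 v}
      (insert s(x₁, xt₁) {e : Sym2 (Vd d) | ∀ v ∈ e, ConnIn d E ωc Set.univ xt₁ v})
      (insert s(x₂, xt₂) {e : Sym2 (Vd d) | ∀ v ∈ e, ConnIn d E ωc Set.univ xt₂ v})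
      (hd0W x₁ xt₁ hxt₁ hZA₁) (hd0W x₂ xt₂ hxt₂ hZA₂) ?_
      (fun ω' hag => ⟨hU0cert x₁ hcube₁ ω' hag, hU0cert x₂ hcube₂ ω' hag⟩)
      (hWcert x₁ y₁ xt₁ he₁E hope₁ hyA₁)
      (hWcert x₂ y₂ xt₂ he₂E hope₂ hyA₂)
    rw [Set.disjoint_left]
    intro e
    induction e using Sym2.ind with
    | _ u v =>
    intro he1 he2
    rcases Set.mem_insert_iff.mp he1 with h1 | h1 <;>
      rcases Set.mem_insert_iff.mp he2 with h2 | h2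
    · exact hee (h1.symm.trans h2)
    · have : ConnIn d E ωc Set.univ xt₂ x₁ :=
        h2 x₁ (by rw [h1]; exact Sym2.mem_iff.mpr (Or.inl rfl))
      exact hZA₂ x₁ (hZ x₁ hcube₁) this
    · have : ConnIn d E ωc Set.univ xt₁ x₂ :=
        h1 x₂ (by rw [h2]; exact Sym2.mem_iff.mpr (Or.inl rfl))
      exact hZA₁ x₂ (hZ x₂ hcube₂) this
    · exact hAA u (h1 u (Sym2.mem_iff.mpr (Or.inl rfl)))
        (h2 u (Sym2.mem_iff.mpr (Or.inl rfl)))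
end
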